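/- arXiv:0710.3975 — 8 statements merged into one kernel-verified Lean document; each statement's English description precedes it below -/
import Mathlib

section
/- Let K be a group, S a subset of K generating K (Subgroup.closure S = ⊤), and k ≥ 1. Then every right-nested commutator ⁅y₁, ⁅y₂, …, ⁅y_k, y_{k+1}⁆…⁆⁆ of arbitrary elements y₁, …, y_{k+1} ∈ K lies in the normal closure in K of the set of right-nested commutators ⁅x₁, ⁅x₂, …, ⁅x_k, x_{k+1}⁆…⁆⁆ all of whose entries x₁, …, x_{k+1} belong to S ∪ S⁻¹. -/
open scoped commutatorElement

/-- The right-nested commutator `⁅y 0, ⁅y 1, …, ⁅y (k-1), y k⁆…⁆⁆` of `k+1` elements. -/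
def rightNested {K : Type*} [Group K] : (k : ℕ) → (Fin (k + 1) → K) → K
  | 0, y => y 0
  | k + 1, y => ⁅y 0, rightNested k (fun i => y i.succ)⁆

lemma map_rightNested {K L : Type*} [Group K] [Group L] (f : K →* L) :
    ∀ (k : ℕ) (y : Fin (k + 1) → K), f (rightNested k y) = rightNested k (f ∘ y)
  | 0, y => rfl
  | k + 1, y => by
    show f ⁅y 0, rightNested k (fun i => y i.succ)⁆ = _
    rw [map_commutatorElement, map_rightNested f k]
    rfl

universe u

lemma key (k : ℕ) : ∀ {Q : Type u} [Group Q] (T : Set Q),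
    Subgroup.closure T = ⊤ → ∀ (M : Subgroup Q), M.Normal →
    (∀ x : Fin (k + 1) → Q, (∀ i, x i ∈ T) → rightNested k x ∈ M) →
    ∀ y : Fin (k + 1) → Q, rightNested k y ∈ M := by
  induction k with
  | zero =>
    intro Q _ T hT M _ h y
    have hTM : T ⊆ (M : Set Q) := fun t ht => h (fun _ => t) (fun _ => ht)
    have : (⊤ : Subgroup Q) ≤ M := hT ▸ (Subgroup.closure_le M).2 hTM
    exact this (Subgroup.mem_top _)
  | succ k ih =>
    intro Q _ T hT M hM h y
    haveI := hM
    set π := QuotientGroup.mk' M with hπdef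
    have hπ : Function.Surjective π := QuotientGroup.mk'_surjective M
    have hT' : Subgroup.closure (π '' T) = ⊤ := by
      rw [← MonoidHom.map_closure, hT]
      exact Subgroup.map_top_of_surjective π hπ
    have hcent : ∀ z : Fin (k + 1) → Q ⧸ M, (∀ i, z i ∈ π '' T) →
        rightNested k z ∈ Subgroup.center (Q ⧸ M) := by
      intro z hz
      choose z₀ hz₀T hz₀ using hz
      have hzz : z = π ∘ z₀ := by funext i; exact (hz₀ i).symm
      rw [Subgroup.mem_center_iff]
      intro g
      have hle : Subgroup.closure (π '' T) ≤ Subgroup.centralizer {rightNested k z} := by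
        apply (Subgroup.closure_le _).2
        rintro t ⟨t₀, ht₀, rfl⟩
        rw [SetLike.mem_coe, Subgroup.mem_centralizer_iff]
        rintro c ⟨rfl⟩
        have hmem : rightNested (k + 1) (Fin.cons t₀ z₀) ∈ M := by
          apply h
          intro i
          refine Fin.cases ht₀ (fun j => hz₀T j) i
        have : π (rightNested (k + 1) (Fin.cons t₀ z₀)) = 1 :=
          (QuotientGroup.eq_one_iff _).2 hmem
        rw [map_rightNested] at this
        have h1 : rightNested (k + 1) (π ∘ Fin.cons t₀ z₀) =
            ⁅π t₀, rightNested k (π ∘ z₀)⁆ := by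
          show ⁅(π ∘ Fin.cons t₀ z₀) 0, _⁆ = _
          congr 1
        rw [h1] at this
        rw [hzz]
        exact (commutatorElement_eq_one_iff_commute.1 this).symm.eq
      have hg : g ∈ Subgroup.centralizer {rightNested k z} := hle (hT' ▸ Subgroup.mem_top g)
      exact ((Subgroup.mem_centralizer_iff.1 hg) _ rfl).symm
    have hall : ∀ z : Fin (k + 1) → Q ⧸ M, rightNested k z ∈ Subgroup.center (Q ⧸ M) :=
      ih (π '' T) hT' (Subgroup.center _) inferInstance hcent
    rw [← QuotientGroup.eq_one_iff]
    change π (rightNested (k + 1) y) = 1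
    rw [map_rightNested]
    show ⁅(π ∘ y) 0, rightNested k (fun i => (π ∘ y) i.succ)⁆ = 1
    apply commutatorElement_eq_one_iff_commute.2
    exact Subgroup.mem_center_iff.1 (hall (fun i => (π ∘ y) i.succ)) _

theorem stmt0 {K : Type*} [Group K] (S : Set K) (hS : Subgroup.closure S = ⊤)
    (k : ℕ) (hk : 1 ≤ k) (y : Fin (k + 1) → K) :
    rightNested k y ∈ Subgroup.normalClosure
      {g : K | ∃ x : Fin (k + 1) → K, (∀ i, x i ∈ S ∪ S⁻¹) ∧ g = rightNested k x} := by
  apply key k (S ∪ S⁻¹)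
  · rw [eq_top_iff, ← hS]
    exact Subgroup.closure_mono Set.subset_union_left
  · exact Subgroup.normalClosure_normal
  · intro x hx
    exact Subgroup.subset_normalClosure ⟨x, hx, rfl⟩
end

section
/- Let K be a group, S a subset of K generating K (Subgroup.closure S = ⊤), and k ≥ 1. Then K is nilpotent of class at most k, i.e. lowerCentralSeries K k = ⊥, if and only if every right-nested commutator ⁅x₁, ⁅x₂, …, ⁅x_k, x_{k+1}⁆…⁆⁆ whose entries x₁, …, x_{k+1} all belong to S ∪ S⁻¹ equals the identity element of K. -/
open scoped commutatorElement

universe u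

/-- Nested commutator on a list: `nest [a₁,…,aₙ] w = ⁅a₁, ⁅a₂, …, ⁅aₙ, w⁆…⁆⁆`. -/
def nest {K : Type*} [Group K] : List K → K → K
  | [], w => w
  | a :: l, w => ⁅a, nest l w⁆

lemma nest_map {K L : Type*} [Group K] [Group L] (φ : K →* L) :
    ∀ (l : List K) (w : K), φ (nest l w) = nest (l.map φ) (φ w)
  | [], w => rfl
  | a :: l, w => by
    simp only [nest, List.map_cons, map_commutatorElement, nest_map φ l w]

lemma rightNested_eq_nest {K : Type*} [Group K] :
    ∀ (k : ℕ) (x : Fin (k + 1) → K),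
      rightNested k x = nest (List.ofFn (fun i : Fin k => x i.castSucc)) (x (Fin.last k))
  | 0, x => rfl
  | k + 1, x => by
    rw [rightNested, rightNested_eq_nest k]
    simp only [List.ofFn_succ, nest, Fin.succ_last, Fin.castSucc_zero, Fin.succ_castSucc]

lemma rightNested_mem_lcs {K : Type*} [Group K] :
    ∀ (k : ℕ) (x : Fin (k + 1) → K), rightNested k x ∈ (⊤ : Subgroup K).lowerCentralSeries k
  | 0, x => Subgroup.mem_top _
  | k + 1, x => by
    have ih := rightNested_mem_lcs k (fun i => x i.succ)
    have h1 : ⁅rightNested k (fun i => x i.succ), x 0⁆ ∈ (⊤ : Subgroup K).lowerCentralSeries (k + 1) := by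
      rw [lowerCentralSeries_succ]
      exact Subgroup.subset_closure ⟨_, ih, x 0, Subgroup.mem_top _, rfl⟩
    have h2 : rightNested (k + 1) x = (⁅rightNested k (fun i => x i.succ), x 0⁆)⁻¹ := by
      rw [commutatorElement_inv]; rfl
    rw [h2]
    exact inv_mem h1

/-- Key induction: if all `n`-fold nested commutators of generators ending in `w` vanish,
then `w` is in the `n`-th term of the upper central series. -/
lemma mem_ucs_of_nest (n : ℕ) :
    ∀ {K : Type u} [Group K] (S : Set K), Subgroup.closure S = ⊤ → ∀ w : K,
      (∀ l : List K, l.length = n → (∀ a ∈ l, a ∈ S ∪ S⁻¹) → nest l w = 1) →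
        w ∈ upperCentralSeries K n := by
  induction n with
  | zero =>
    intro K _ S hS w h
    have := h [] rfl (by simp)
    simp only [nest] at this
    simp [this, upperCentralSeries_zero, Subgroup.mem_bot]
  | succ n ih =>
    intro K _ S hS w h
    set π := QuotientGroup.mk' (Subgroup.center K) with hπ
    -- the image of S generates the quotient
    have hS' : Subgroup.closure (π '' S) = ⊤ := by
      rw [← MonoidHom.map_closure, hS, ← MonoidHom.range_eq_map,
        MonoidHom.range_eq_top_of_surjective]
      exact QuotientGroup.mk'_surjective _
    -- w mod the center satisfies the length-n hypothesis
    have key : ∀ l' : List (K ⧸ Subgroup.center K), l'.length = n →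
        (∀ a ∈ l', a ∈ (π '' S) ∪ (π '' S)⁻¹) → nest l' (π w) = 1 := by
      intro l' hlen hmem
      -- lift l' to a list of elements of S ∪ S⁻¹
      have : ∃ l : List K, (∀ a ∈ l, a ∈ S ∪ S⁻¹) ∧ l.map π = l' := by
        clear hlen
        induction l' with
        | nil => exact ⟨[], by simp, rfl⟩
        | cons a l' ihl =>
          obtain ⟨l, hl1, hl2⟩ := ihl (fun b hb => hmem b (List.mem_cons_of_mem a hb))
          have ha := hmem a List.mem_cons_self
          rcases ha with ⟨s, hs, rfl⟩ | ha
          · refine ⟨s :: l, ?_, by simp [hl2]⟩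
            intro b hb
            rcases List.mem_cons.mp hb with rfl | hb
            · exact Or.inl hs
            · exact hl1 b hb
          · rw [Set.mem_inv] at ha
            obtain ⟨s, hs, hsa⟩ := ha
            refine ⟨s⁻¹ :: l, ?_, ?_⟩
            · intro b hb
              rcases List.mem_cons.mp hb with rfl | hb
              · exact Or.inr (by simpa using hs)
              · exact hl1 b hb
            · simp only [List.map_cons, hl2, map_inv]
              rw [show π s = a⁻¹ from hsa, inv_inv]
      obtain ⟨l, hl1, rfl⟩ := this
      rw [← nest_map]
      have hll : l.length = n := by simpa using hlen
      -- nest l w is central: it commutes with every element of S ∪ S⁻¹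
      have hcentral : nest l w ∈ Subgroup.center K := by
        rw [Subgroup.mem_center_iff]
        intro g
        have hg : g ∈ Subgroup.closure S := hS ▸ Subgroup.mem_top g
        induction hg using Subgroup.closure_induction with
        | mem s hs =>
          have hcomm := h (s :: l) (by simp [hll]) ?_
          · simp only [nest] at hcomm
            exact (commutatorElement_eq_one_iff_commute.mp hcomm).eq
          · intro b hb
            rcases List.mem_cons.mp hb with rfl | hb
            · exact Or.inl hs
            · exact hl1 b hb
        | one => simp
        | mul a b _ _ ha hb => rw [mul_assoc, hb, ← mul_assoc, ha, mul_assoc]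
        | inv a _ ha =>
          have hc : Commute a (nest l w) := ha
          exact hc.inv_left.eq
      have : π (nest l w) = 1 := (QuotientGroup.eq_one_iff _).mpr hcentral
      rw [this]
    have hw : π w ∈ upperCentralSeries (K ⧸ Subgroup.center K) n := ih (π '' S) hS' (π w) key
    have := comap_upperCentralSeries_quotient_center (G := K) n
    show w ∈ Subgroup.upperCentralSeries K n.succ
    rw [← this]
    exact hw

theorem stmt1 {K : Type*} [Group K] (S : Set K) (hS : Subgroup.closure S = ⊤)
    (k : ℕ) (hk : 1 ≤ k) :
    (⊤ : Subgroup K).lowerCentralSeries k = ⊥ ↔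
      ∀ x : Fin (k + 1) → K, (∀ i, x i ∈ S ∪ S⁻¹) → rightNested k x = 1 := by
  constructor
  · intro h x _
    have := rightNested_mem_lcs k x
    rw [h, Subgroup.mem_bot] at this
    exact this
  · intro h
    -- every element of S lies in the k-th upper central series
    have hsub : S ⊆ (upperCentralSeries K k : Set K) := by
      intro s hs
      apply mem_ucs_of_nest k S hS s
      intro l hlen hmem
      -- build the Fin (k+1) tuple from l and s
      set x : Fin (k + 1) → K := fun i => if hi : (i : ℕ) < k then l.get ⟨i, hlen ▸ hi⟩ else s
        with hx
      have h1 : ∀ i : Fin k, x i.castSucc = l.get ⟨i, hlen ▸ i.isLt⟩ := by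
        intro i
        simp [hx, Fin.coe_castSucc, i.isLt]
      have h2 : x (Fin.last k) = s := by simp [hx]
      have hnest : nest l s = rightNested k x := by
        rw [rightNested_eq_nest, h2]
        congr 1
        apply List.ext_get (by simp [hlen])
        intro i hi1 hi2
        simp only [List.get_ofFn]
        rw [h1]
        rfl
      rw [hnest]
      apply h
      intro i
      rw [hx]
      dsimp only
      split
      · exact hmem _ (List.get_mem l _)
      · exact Or.inl hs
    have htop : upperCentralSeries K k = ⊤ := by
      rw [eq_top_iff, ← hS, Subgroup.closure_le]
      exact hsub
    haveI : Group.IsNilpotent K := ⟨⟨k, htop⟩⟩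
    exact lowerCentralSeries_eq_bot_iff_nilpotencyClass_le.mpr
      (upperCentralSeries_eq_top_iff_nilpotencyClass_le.mp htop)
end

section
/- Let p be a prime, n ≥ 1, and let ζ be a unit of ZMod p whose multiplicative order is exactly n. Let σ and τ be the (ZMod p)-algebra automorphisms of the polynomial ring A = (ZMod p)[X,Y] determined by σ(X) = Y, σ(Y) = X and τ(X) = ζ·X, τ(Y) = ζ⁻¹·Y. Then the subalgebra of A consisting of elements fixed by both σ and τ (equivalently, the ring of invariants of the dihedral group of order 2n generated by σ and τ) equals Algebra.adjoin (ZMod p) {X*Y, X^n + Y^n}. -/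
open MvPolynomial

/-- The algebra automorphism `σ` of `(ZMod p)[X,Y]` with `σ(X) = Y`, `σ(Y) = X`. -/
noncomputable def sigmaSwap (p : ℕ) :
    MvPolynomial (Fin 2) (ZMod p) →ₐ[ZMod p] MvPolynomial (Fin 2) (ZMod p) :=
  aeval ![X 1, X 0]

/-- The algebra automorphism `τ` of `(ZMod p)[X,Y]` with `τ(X) = ζ·X`, `τ(Y) = ζ⁻¹·Y`. -/
noncomputable def tauDiag (p : ℕ) (ζ : (ZMod p)ˣ) :
    MvPolynomial (Fin 2) (ZMod p) →ₐ[ZMod p] MvPolynomial (Fin 2) (ZMod p) :=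
  aeval ![C (ζ : ZMod p) * X 0, C ((ζ⁻¹ : (ZMod p)ˣ) : ZMod p) * X 1]



lemma monomial_fin2 {R : Type*} [CommSemiring R] (d : Fin 2 →₀ ℕ) (c : R) :
    monomial d c = C c * X 0 ^ d 0 * X 1 ^ d 1 := by
  rw [monomial_eq, Finsupp.prod_fintype _ _ (fun i => pow_zero _), Fin.prod_univ_two, mul_assoc]

noncomputable def swapd (d : Fin 2 →₀ ℕ) : Fin 2 →₀ ℕ :=
  Finsupp.equivFunOnFinite.symm ![d 1, d 0]

@[simp] lemma swapd_0 (d : Fin 2 →₀ ℕ) : swapd d 0 = d 1 := rfl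
@[simp] lemma swapd_1 (d : Fin 2 →₀ ℕ) : swapd d 1 = d 0 := rfl
@[simp] lemma swapd_swapd (d : Fin 2 →₀ ℕ) : swapd (swapd d) = d := by
  ext i; fin_cases i <;> simp



lemma sigma_monomial (p : ℕ) (d : Fin 2 →₀ ℕ) (c : ZMod p) :
    sigmaSwap p (monomial d c) = monomial (swapd d) c := by
  rw [monomial_fin2, monomial_fin2, swapd_0, swapd_1]
  simp [sigmaSwap, map_mul, map_pow, algebraMap_eq]
  ring

lemma tau_monomial (p : ℕ) (ζ : (ZMod p)ˣ) (d : Fin 2 →₀ ℕ) (c : ZMod p) :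
    tauDiag p ζ (monomial d c) =
      monomial d ((ζ : ZMod p) ^ d 0 * ((ζ⁻¹ : (ZMod p)ˣ) : ZMod p) ^ d 1 * c) := by
  rw [monomial_fin2, monomial_fin2]
  simp [tauDiag, map_mul, map_pow, algebraMap_eq, mul_pow, C_pow, C_mul]
  ring

lemma coeff_sigma (p : ℕ) (a : MvPolynomial (Fin 2) (ZMod p)) (d : Fin 2 →₀ ℕ) :
    coeff d (sigmaSwap p a) = coeff (swapd d) a := by
  induction a using MvPolynomial.induction_on' with
  | monomial d' c =>
    rw [sigma_monomial, coeff_monomial, coeff_monomial]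
    by_cases h : d' = swapd d
    · subst h; simp
    · rw [if_neg, if_neg h]
      intro he; exact h (by rw [← he, swapd_swapd])
  | add f g hf hg => simp [map_add, hf, hg]

lemma coeff_tau (p : ℕ) (ζ : (ZMod p)ˣ) (a : MvPolynomial (Fin 2) (ZMod p)) (d : Fin 2 →₀ ℕ) :
    coeff d (tauDiag p ζ a) =
      (ζ : ZMod p) ^ d 0 * ((ζ⁻¹ : (ZMod p)ˣ) : ZMod p) ^ d 1 * coeff d a := by
  induction a using MvPolynomial.induction_on' with
  | monomial d' c =>
    rw [tau_monomial, coeff_monomial, coeff_monomial]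
    by_cases h : d' = d
    · subst h; simp
    · simp [if_neg h]
  | add f g hf hg => simp [map_add, hf, hg]; ring

lemma pow_n_mem (p n : ℕ) (k : ℕ) :
    (X 0 : MvPolynomial (Fin 2) (ZMod p)) ^ (k * n) + X 1 ^ (k * n) ∈
      Algebra.adjoin (ZMod p) {X 0 * X 1, X 0 ^ n + X 1 ^ n} := by
  induction k using Nat.strong_induction_on with
  | _ k ih =>
    match k with
    | 0 => simpa using add_mem (one_mem _) (one_mem _)
    | 1 => simpa using Algebra.subset_adjoin (by simp)
    | (k + 2) =>
      have h1 := ih (k + 1) (by omega)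
      have h0 := ih k (by omega)
      have hg : (X 0 : MvPolynomial (Fin 2) (ZMod p)) ^ n + X 1 ^ n ∈
          Algebra.adjoin (ZMod p) {X 0 * X 1, X 0 ^ n + X 1 ^ n} :=
        Algebra.subset_adjoin (by simp)
      have hxy : (X 0 : MvPolynomial (Fin 2) (ZMod p)) * X 1 ∈
          Algebra.adjoin (ZMod p) {X 0 * X 1, X 0 ^ n + X 1 ^ n} :=
        Algebra.subset_adjoin (by simp)
      have key : (X 0 : MvPolynomial (Fin 2) (ZMod p)) ^ ((k + 2) * n) + X 1 ^ ((k + 2) * n) =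
          (X 0 ^ ((k + 1) * n) + X 1 ^ ((k + 1) * n)) * (X 0 ^ n + X 1 ^ n) -
            (X 0 * X 1) ^ n * (X 0 ^ (k * n) + X 1 ^ (k * n)) := by ring
      rw [key]
      exact sub_mem (mul_mem h1 hg) (mul_mem (pow_mem hxy n) h0)

lemma orbit_mem_le (p n : ℕ) (i j : ℕ) (hji : j ≤ i) (hmod : i ≡ j [MOD n]) :
    (X 0 : MvPolynomial (Fin 2) (ZMod p)) ^ i * X 1 ^ j + X 0 ^ j * X 1 ^ i ∈
      Algebra.adjoin (ZMod p) {X 0 * X 1, X 0 ^ n + X 1 ^ n} := by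
  have hd : n ∣ i - j := (Nat.modEq_iff_dvd' hji).mp hmod.symm
  obtain ⟨k, hk⟩ := hd
  have hi : i = j + k * n := by rw [Nat.mul_comm]; omega
  subst hi
  have hxy : (X 0 : MvPolynomial (Fin 2) (ZMod p)) * X 1 ∈
      Algebra.adjoin (ZMod p) {X 0 * X 1, X 0 ^ n + X 1 ^ n} :=
    Algebra.subset_adjoin (by simp)
  have key : (X 0 : MvPolynomial (Fin 2) (ZMod p)) ^ (j + k * n) * X 1 ^ j +
      X 0 ^ j * X 1 ^ (j + k * n) =
      (X 0 * X 1) ^ j * (X 0 ^ (k * n) + X 1 ^ (k * n)) := by ring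
  rw [key]
  exact mul_mem (pow_mem hxy j) (pow_n_mem p n k)

lemma orbit_mem (p n : ℕ) (i j : ℕ) (hmod : i ≡ j [MOD n]) :
    (X 0 : MvPolynomial (Fin 2) (ZMod p)) ^ i * X 1 ^ j + X 0 ^ j * X 1 ^ i ∈
      Algebra.adjoin (ZMod p) {X 0 * X 1, X 0 ^ n + X 1 ^ n} := by
  rcases le_total j i with h | h
  · exact orbit_mem_le p n i j h hmod
  · have := orbit_mem_le p n j i h hmod.symm
    rwa [add_comm (X 0 ^ j * X 1 ^ i)] at this

lemma invariant_mem (p : ℕ) (hp : p.Prime) (n : ℕ) (ζ : (ZMod p)ˣ) (hζ : orderOf ζ = n) :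
    ∀ N (a : MvPolynomial (Fin 2) (ZMod p)), a.support.card ≤ N →
      sigmaSwap p a = a → tauDiag p ζ a = a →
      a ∈ Algebra.adjoin (ZMod p) {X 0 * X 1, X 0 ^ n + X 1 ^ n} := by
  haveI : Fact p.Prime := ⟨hp⟩
  intro N
  induction N with
  | zero =>
    intro a hcard _ _
    have : a.support = ∅ := Finset.card_eq_zero.mp (Nat.le_zero.mp hcard)
    rw [show a = 0 from support_eq_empty.mp this]
    exact zero_mem _
  | succ N ih =>
    intro a hcard hσ hτ
    rcases eq_or_ne a 0 with rfl | h0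
    · exact zero_mem _
    obtain ⟨d, hd⟩ := support_nonempty.mpr h0
    set c := coeff d a with hc
    have hcne : c ≠ 0 := mem_support_iff.mp hd
    -- from τ-invariance: ζ ^ d 0 = ζ ^ d 1 as units
    have hu : ζ ^ d 0 = ζ ^ d 1 := by
      have h1 := congrArg (coeff d) hτ
      rw [coeff_tau, ← hc] at h1
      have h2 : ((ζ : ZMod p) ^ d 0 * ((ζ⁻¹ : (ZMod p)ˣ) : ZMod p) ^ d 1 - 1) * c = 0 := by
        linear_combination h1
      rcases mul_eq_zero.mp h2 with h3 | h3
      · have h4 : ((ζ ^ d 0 * ζ⁻¹ ^ d 1 : (ZMod p)ˣ) : ZMod p) = 1 := by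
          rw [Units.val_mul, Units.val_pow_eq_pow_val, Units.val_pow_eq_pow_val]
          exact sub_eq_zero.mp h3
        have h5 : ζ ^ d 0 * ζ⁻¹ ^ d 1 = 1 := Units.ext (by simpa using h4)
        rw [inv_pow, mul_inv_eq_one] at h5
        exact h5
      · exact absurd h3 hcne
    have hmod : d 0 ≡ d 1 [MOD n] := by
      have := (pow_eq_pow_iff_modEq (x := ζ)).mp hu
      rwa [hζ] at this
    have hsymc : coeff (swapd d) a = c := by
      have h1 := congrArg (coeff d) hσ
      rwa [coeff_sigma] at h1
    -- weight-one facts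
    have hw : (ζ : ZMod p) ^ d 0 * ((ζ⁻¹ : (ZMod p)ˣ) : ZMod p) ^ d 1 = 1 := by
      have : ((ζ ^ d 0 * ζ⁻¹ ^ d 1 : (ZMod p)ˣ) : ZMod p) = 1 := by
        rw [inv_pow, ← hu, mul_inv_cancel]; rfl
      rw [Units.val_mul, Units.val_pow_eq_pow_val, Units.val_pow_eq_pow_val] at this
      exact this
    have hw' : (ζ : ZMod p) ^ d 1 * ((ζ⁻¹ : (ZMod p)ˣ) : ZMod p) ^ d 0 = 1 := by
      have : ((ζ ^ d 1 * ζ⁻¹ ^ d 0 : (ZMod p)ˣ) : ZMod p) = 1 := by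
        rw [inv_pow, hu, mul_inv_cancel]; rfl
      rw [Units.val_mul, Units.val_pow_eq_pow_val, Units.val_pow_eq_pow_val] at this
      exact this
    -- the symmetrized monomial b
    by_cases hde : swapd d = d
    · -- diagonal case
      set b := monomial d (1 : ZMod p) with hb
      have hii : d 1 = d 0 := by
        have := congrArg (fun f : Fin 2 →₀ ℕ => f 0) hde
        simpa using this
      have hbS : b ∈ Algebra.adjoin (ZMod p) {X 0 * X 1, X 0 ^ n + X 1 ^ n} := by
        have : b = (X 0 * X 1) ^ d 0 := by
          rw [hb, monomial_fin2, hii, C_1, one_mul, mul_pow]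
        rw [this]
        exact pow_mem (Algebra.subset_adjoin (by simp)) _
      have hbσ : sigmaSwap p b = b := by rw [hb, sigma_monomial, hde]
      have hbτ : tauDiag p ζ b = b := by rw [hb, tau_monomial, mul_one, hw]
      have hbd : coeff d b = 1 := by rw [hb, coeff_monomial, if_pos rfl]
      have hbe : ∀ e, e ≠ d → coeff e b = 0 := by
        intro e he; rw [hb, coeff_monomial, if_neg (Ne.symm he)]
      -- finish
      set a' := a - C c * b with ha'
      have hσ' : sigmaSwap p a' = a' := by
        rw [ha', map_sub, map_mul, hσ, hbσ]
        congr 1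
        simp [algebraMap_eq]
      have hτ' : tauDiag p ζ a' = a' := by
        rw [ha', map_sub, map_mul, hτ, hbτ]
        congr 1
        simp [algebraMap_eq]
      have hsub : a'.support ⊆ a.support.erase d := by
        intro e he
        rw [Finset.mem_erase]
        have hce : coeff e a' ≠ 0 := mem_support_iff.mp he
        constructor
        · rintro rfl
          apply hce
          rw [ha', coeff_sub, coeff_C_mul, hbd, mul_one, ← hc, sub_self]
        · by_contra hes
          apply hce
          have h1 : coeff e a = 0 := by_contra fun h => hes (mem_support_iff.mpr h)
          have h2 : e ≠ d := by rintro rfl; exact hcne (hc ▸ h1)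
          rw [ha', coeff_sub, coeff_C_mul, hbe e h2, mul_zero, h1, sub_zero]
      have hcard' : a'.support.card ≤ N := by
        have h1 : (a.support.erase d).card < a.support.card := Finset.card_erase_lt_of_mem hd
        have h2 := Finset.card_le_card hsub
        omega
      have ha'S := ih a' hcard' hσ' hτ'
      have : a = a' + C c * b := by rw [ha']; ring
      rw [this]
      exact add_mem ha'S (mul_mem (by rw [← algebraMap_eq]; exact Subalgebra.algebraMap_mem _ _) hbS)
    · -- off-diagonal case
      set b := monomial d (1 : ZMod p) + monomial (swapd d) (1 : ZMod p) with hb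
      have hbS : b ∈ Algebra.adjoin (ZMod p) {X 0 * X 1, X 0 ^ n + X 1 ^ n} := by
        have : b = X 0 ^ d 0 * X 1 ^ d 1 + X 0 ^ d 1 * X 1 ^ d 0 := by
          rw [hb, monomial_fin2, monomial_fin2, swapd_0, swapd_1, C_1]
          ring
        rw [this]
        exact orbit_mem p n (d 0) (d 1) hmod
      have hbσ : sigmaSwap p b = b := by
        rw [hb, map_add, sigma_monomial, sigma_monomial, swapd_swapd, add_comm]
      have hbτ : tauDiag p ζ b = b := by
        rw [hb, map_add, tau_monomial, tau_monomial, swapd_0, swapd_1, mul_one, mul_one, hw, hw']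
      have hbd : coeff d b = 1 := by
        rw [hb, coeff_add, coeff_monomial, coeff_monomial, if_pos rfl, if_neg hde, add_zero]
      have hbs : coeff (swapd d) b = 1 := by
        rw [hb, coeff_add, coeff_monomial, coeff_monomial, if_pos rfl,
          if_neg (fun h => hde (by rw [← h])), zero_add]
      have hbe : ∀ e, e ≠ d → e ≠ swapd d → coeff e b = 0 := by
        intro e he1 he2
        rw [hb, coeff_add, coeff_monomial, coeff_monomial, if_neg (Ne.symm he1),
          if_neg (Ne.symm he2), add_zero]
      set a' := a - C c * b with ha'
      have hσ' : sigmaSwap p a' = a' := by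
        rw [ha', map_sub, map_mul, hσ, hbσ]
        congr 1
        simp [algebraMap_eq]
      have hτ' : tauDiag p ζ a' = a' := by
        rw [ha', map_sub, map_mul, hτ, hbτ]
        congr 1
        simp [algebraMap_eq]
      have hsub : a'.support ⊆ a.support.erase d := by
        intro e he
        rw [Finset.mem_erase]
        have hce : coeff e a' ≠ 0 := mem_support_iff.mp he
        constructor
        · rintro rfl
          apply hce
          rw [ha', coeff_sub, coeff_C_mul, hbd, mul_one, ← hc, sub_self]
        · by_cases hes : e = swapd d
          · subst hes
            exfalso; apply hce
            rw [ha', coeff_sub, coeff_C_mul, hbs, mul_one, hsymc, sub_self]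
          · by_contra hesup
            apply hce
            have h1 : coeff e a = 0 := by_contra fun h => hesup (mem_support_iff.mpr h)
            have h2 : e ≠ d := by rintro rfl; exact hcne (hc ▸ h1)
            rw [ha', coeff_sub, coeff_C_mul, hbe e h2 hes, mul_zero, h1, sub_zero]
      have hcard' : a'.support.card ≤ N := by
        have h1 : (a.support.erase d).card < a.support.card := Finset.card_erase_lt_of_mem hd
        have h2 := Finset.card_le_card hsub
        omega
      have ha'S := ih a' hcard' hσ' hτ'
      have : a = a' + C c * b := by rw [ha']; ring
      rw [this]
      exact add_mem ha'S (mul_mem (by rw [← algebraMap_eq]; exact Subalgebra.algebraMap_mem _ _) hbS)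


theorem stmt3 (p : ℕ) (hp : p.Prime) (n : ℕ) (hn : 1 ≤ n)
    (ζ : (ZMod p)ˣ) (hζ : orderOf ζ = n) (a : MvPolynomial (Fin 2) (ZMod p)) :
    (sigmaSwap p a = a ∧ tauDiag p ζ a = a) ↔
      a ∈ Algebra.adjoin (ZMod p) {X 0 * X 1, X 0 ^ n + X 1 ^ n} := by
  constructor
  · rintro ⟨hσ, hτ⟩
    exact invariant_mem p hp n ζ hζ a.support.card a le_rfl hσ hτ
  · intro ha
    have hζn : ((ζ ^ n : (ZMod p)ˣ) : ZMod p) = 1 := by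
      rw [← hζ, pow_orderOf_eq_one]; rfl
    have hζn' : ((ζ⁻¹ ^ n : (ZMod p)ˣ) : ZMod p) = 1 := by
      rw [inv_pow, ← hζ, pow_orderOf_eq_one]; rfl
    constructor
    · have : a ∈ AlgHom.equalizer (sigmaSwap p) (AlgHom.id (ZMod p) _) := by
        apply Algebra.adjoin_le _ ha
        rintro x hx
        simp only [Set.mem_insert_iff, Set.mem_singleton_iff] at hx
        rcases hx with rfl | rfl
        · show sigmaSwap p _ = _
          simp [sigmaSwap]
          ring
        · show sigmaSwap p _ = _
          simp [sigmaSwap]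
          ring
      exact this
    · have : a ∈ AlgHom.equalizer (tauDiag p ζ) (AlgHom.id (ZMod p) _) := by
        apply Algebra.adjoin_le _ ha
        rintro x hx
        simp only [Set.mem_insert_iff, Set.mem_singleton_iff] at hx
        rcases hx with rfl | rfl
        · show tauDiag p ζ _ = _
          simp [tauDiag]
          have h1 : ((ζ : ZMod p) * ((ζ⁻¹ : (ZMod p)ˣ) : ZMod p)) = 1 := by
            rw [← Units.val_mul, mul_inv_cancel]; rfl
          calc C (ζ : ZMod p) * (X 0 : MvPolynomial (Fin 2) (ZMod p)) * (C ((ζ⁻¹ : (ZMod p)ˣ) : ZMod p) * X 1)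
              = C ((ζ : ZMod p) * ((ζ⁻¹ : (ZMod p)ˣ) : ZMod p)) * (X 0 * X 1) := by
                rw [C_mul]; ring
            _ = X 0 * X 1 := by rw [h1, C_1, one_mul]
        · show tauDiag p ζ _ = _
          simp [tauDiag]
          have h1 : ((ζ : ZMod p)) ^ n = 1 := by
            rw [← Units.val_pow_eq_pow_val, hζn]
          have h2 : (((ζ⁻¹ : (ZMod p)ˣ) : ZMod p)) ^ n = 1 := by
            rw [← Units.val_pow_eq_pow_val, hζn']
          calc (C (ζ : ZMod p) * (X 0 : MvPolynomial (Fin 2) (ZMod p))) ^ n + (C ((ζ⁻¹ : (ZMod p)ˣ) : ZMod p) * X 1) ^ n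
              = C ((ζ : ZMod p) ^ n) * X 0 ^ n + C (((ζ⁻¹ : (ZMod p)ˣ) : ZMod p) ^ n) * X 1 ^ n := by
                rw [C_pow, C_pow]; ring
            _ = X 0 ^ n + X 1 ^ n := by rw [h1, h2, C_1, one_mul, one_mul]
      exact this
end

section
/- Let F = ZMod 11, A = F[X,Y], D the unique F-linear derivation of A with D(X) = X^11 and D(Y) = Y^11, and S = Algebra.adjoin F {X*Y, X^5 + Y^5}. Let B = F[Y₂, Y₆, Y₁₀] be a polynomial ring in three variables and φ : B → A an F-algebra homomorphism such that φ(Y₂) = X*Y, φ(Y₆) ∈ S is homogeneous of total degree 6, and φ(Y₁₀) ∈ S is homogeneous of total degree 10. Then for every g ∈ B with φ(g) = D(X*Y), the coefficient of the monomial Y₂·Y₁₀ in g is nonzero. -/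
open MvPolynomial

abbrev Fq := ZMod 11
abbrev AA := MvPolynomial (Fin 2) Fq

lemma deg2 (d : Fin 2 →₀ ℕ) : d.degree = d 0 + d 1 := by
  rw [Finsupp.degree_apply, Finset.sum_subset (Finset.subset_univ _)
    (fun x _ hx => Finsupp.notMem_support_iff.mp hx), Fin.sum_univ_two]

noncomputable def okSub : Subalgebra Fq AA where
  carrier := {p | ∀ m ∈ p.support, ((m 0 : ZMod 5) = (m 1 : ZMod 5))}
  mul_mem' := by
    intro p q hp hq m hm
    rcases Finset.mem_add.mp (MvPolynomial.support_mul p q hm) with ⟨m1, hm1, m2, hm2, rfl⟩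
    have h1 := hp m1 hm1
    have h2 := hq m2 hm2
    simp only [Finsupp.add_apply, Nat.cast_add, h1, h2]
  add_mem' := by
    intro p q hp hq m hm
    rcases Finset.mem_union.mp (MvPolynomial.support_add hm) with h | h
    exacts [hp m h, hq m h]
  one_mem' := by
    intro m hm
    rw [show (1 : AA) = monomial 0 1 from rfl, support_monomial] at hm
    rw [if_neg (by decide : (1 : Fq) ≠ 0), Finset.mem_singleton] at hm
    rw [hm]; simp
  zero_mem' := by simp
  algebraMap_mem' := by
    intro r m hm
    have : (algebraMap Fq AA r) = C r := rfl
    rw [this] at hm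
    rw [show (C r : AA) = monomial 0 r from rfl, support_monomial] at hm
    by_cases h : r = 0
    · simp [h] at hm
    · rw [if_neg h] at hm
      rw [Finset.mem_singleton.mp hm]; simp

lemma adjoin_le_okSub :
    Algebra.adjoin Fq {(X 0 * X 1 : AA), X 0 ^ 5 + X 1 ^ 5} ≤ okSub := by
  rw [Algebra.adjoin_le_iff]
  rintro p hp
  rcases hp with rfl | rfl
  · intro m hm
    have : (X 0 * X 1 : AA) = monomial (Finsupp.single 0 1 + Finsupp.single 1 1) 1 := by
      rw [X, X, monomial_mul, one_mul]
    rw [this, support_monomial, if_neg (by decide : (1 : Fq) ≠ 0), Finset.mem_singleton] at hm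
    rw [hm]; simp
  · intro m hm
    have h0 : (X 0 ^ 5 : AA) = monomial (Finsupp.single 0 5) 1 := X_pow_eq_monomial
    have h1 : (X 1 ^ 5 : AA) = monomial (Finsupp.single 1 5) 1 := X_pow_eq_monomial
    rcases Finset.mem_union.mp (MvPolynomial.support_add hm) with h | h
    · rw [h0, support_monomial, if_neg (by decide : (1 : Fq) ≠ 0), Finset.mem_singleton] at h
      rw [h]; simp; decide
    · rw [h1, support_monomial, if_neg (by decide : (1 : Fq) ≠ 0), Finset.mem_singleton] at h
      rw [h]; simp; decide

lemma coeff_zero_of_okSub {p : AA} (hp : p ∈ okSub) (m : Fin 2 →₀ ℕ)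
    (hm : ((m 0 : ZMod 5)) ≠ (m 1 : ZMod 5)) : coeff m p = 0 := by
  by_contra h
  exact hm (hp m (mem_support_iff.mpr h))

lemma upow (n : ℕ) : (X 0 * X 1 : AA) ^ n =
    monomial (Finsupp.single 0 n + Finsupp.single 1 n) 1 := by
  have : (X 0 * X 1 : AA) = monomial (Finsupp.single 0 1 + Finsupp.single 1 1) 1 := by
    rw [X, X, monomial_mul, one_mul]
  rw [this, monomial_pow, one_pow, smul_add, Finsupp.smul_single, Finsupp.smul_single,
    smul_eq_mul, mul_one]

theorem stmt6
    (D : Derivation (ZMod 11) (MvPolynomial (Fin 2) (ZMod 11)) (MvPolynomial (Fin 2) (ZMod 11)))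
    (hDX : D (X 0) = X 0 ^ 11) (hDY : D (X 1) = X 1 ^ 11)
    (φ : MvPolynomial (Fin 3) (ZMod 11) →ₐ[ZMod 11] MvPolynomial (Fin 2) (ZMod 11))
    (h2 : φ (X 0) = X 0 * X 1)
    (h6 : φ (X 1) ∈ Algebra.adjoin (ZMod 11) {X 0 * X 1, X 0 ^ 5 + X 1 ^ 5} ∧
      (φ (X 1)).IsHomogeneous 6)
    (h10 : φ (X 2) ∈ Algebra.adjoin (ZMod 11) {X 0 * X 1, X 0 ^ 5 + X 1 ^ 5} ∧
      (φ (X 2)).IsHomogeneous 10)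
    (g : MvPolynomial (Fin 3) (ZMod 11)) (hg : φ g = D (X 0 * X 1)) :
    coeff (Finsupp.single (0 : Fin 3) 1 + Finsupp.single 2 1) g ≠ 0 := by
  obtain ⟨h6S, h6H⟩ := h6
  obtain ⟨h10S, h10H⟩ := h10
  have hP6mem : φ (X 1) ∈ okSub := adjoin_le_okSub h6S
  set d : Fin 2 →₀ ℕ := Finsupp.single 0 11 + Finsupp.single 1 1 with hd_def
  have hd0 : d 0 = 11 := by simp [hd_def]
  have hd1 : d 1 = 1 := by simp [hd_def]
  have hddeg : d.degree = 12 := by rw [deg2, hd0, hd1]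
  -- right-hand side coefficient
  have hR : coeff d (D (X 0 * X 1)) = 1 := by
    rw [Derivation.leibniz, hDX, hDY, smul_eq_mul, smul_eq_mul]
    have e1 : (X 0 * X 1 ^ 11 : AA) = monomial (Finsupp.single 0 1 + Finsupp.single 1 11) 1 := by
      rw [X_pow_eq_monomial, X, monomial_mul, one_mul]
    have e2 : (X 1 * X 0 ^ 11 : AA) = monomial (Finsupp.single 1 1 + Finsupp.single 0 11) 1 := by
      rw [X_pow_eq_monomial, X, monomial_mul, one_mul]
    rw [coeff_add, e1, e2, coeff_monomial, coeff_monomial, if_neg, if_pos]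
    · norm_num
    · rw [hd_def]; exact add_comm _ _
    · intro h
      have := DFunLike.congr_fun h 1
      simp [hd_def] at this
  -- expand φ g
  have hexp : φ g = ∑ m ∈ g.support, C (coeff m g) *
      ((X 0 * X 1) ^ m 0 * (φ (X 1)) ^ m 1 * (φ (X 2)) ^ m 2) := by
    conv_lhs => rw [← support_sum_monomial_coeff g]
    rw [map_sum]
    refine Finset.sum_congr rfl fun m _ => ?_
    rw [monomial_eq, map_mul]
    congr 1
    · rw [← MvPolynomial.algebraMap_eq, AlgHom.commutes, MvPolynomial.algebraMap_eq]
    · rw [map_finsuppProd, Finsupp.prod_fintype _ _ (fun i => by simp)]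
      rw [Fin.prod_univ_three]
      simp [h2]
  have key : ∑ m ∈ g.support, coeff d (C (coeff m g) *
      ((X 0 * X 1) ^ m 0 * (φ (X 1)) ^ m 1 * (φ (X 2)) ^ m 2)) = 1 := by
    rw [← coeff_sum, ← hexp, hg]; exact hR
  set m₀ : Fin 3 →₀ ℕ := Finsupp.single (0 : Fin 3) 1 + Finsupp.single 2 1 with hm₀_def
  have hone : (X 0 * X 1 : AA).IsHomogeneous 2 := by
    have := (isHomogeneous_X (ZMod 11) (0 : Fin 2)).mul (isHomogeneous_X (ZMod 11) 1)
    simpa using this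
  -- the off-target terms vanish
  have hvanish : ∀ m ∈ g.support, m ≠ m₀ → coeff d (C (coeff m g) *
      ((X 0 * X 1) ^ m 0 * (φ (X 1)) ^ m 1 * (φ (X 2)) ^ m 2)) = 0 := by
    intro m _ hne
    have hprod : (C (coeff m g) *
        ((X 0 * X 1) ^ m 0 * (φ (X 1)) ^ m 1 * (φ (X 2)) ^ m 2)).IsHomogeneous
        (0 + (2 * m 0 + 6 * m 1 + 10 * m 2)) := by
      exact (isHomogeneous_C _ _).mul (((hone.pow (m 0)).mul (h6H.pow (m 1))).mul
        (h10H.pow (m 2)))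
    by_cases hdeg : 2 * m 0 + 6 * m 1 + 10 * m 2 = 12
    · have hcases : (m 0 = 6 ∧ m 1 = 0 ∧ m 2 = 0) ∨ (m 0 = 3 ∧ m 1 = 1 ∧ m 2 = 0) ∨
          (m 0 = 0 ∧ m 1 = 2 ∧ m 2 = 0) ∨ (m 0 = 1 ∧ m 1 = 0 ∧ m 2 = 1) := by
        have hb' : m 1 ≤ 2 := by omega
        have hc' : m 2 ≤ 1 := by omega
        interval_cases h1 : (m 1) <;> interval_cases h2 : (m 2) <;> omega
      rcases hcases with ⟨ha, hb, hc⟩ | ⟨ha, hb, hc⟩ | ⟨ha, hb, hc⟩ | ⟨ha, hb, hc⟩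
      · rw [ha, hb, hc, pow_zero, pow_zero, mul_one, mul_one, coeff_C_mul, upow,
          coeff_monomial, if_neg, mul_zero]
        intro h
        have := DFunLike.congr_fun h 0
        simp [hd_def] at this
      · rw [ha, hb, hc, pow_zero, pow_one, mul_one, coeff_C_mul, upow,
          coeff_monomial_mul', if_neg, mul_zero]
        intro h
        have := h 1
        simp [hd_def] at this
      · rw [ha, hb, hc, pow_zero, pow_zero, one_mul, mul_one, coeff_C_mul, pow_two, coeff_mul]
        rw [Finset.sum_eq_zero, mul_zero]
        intro x hx
        have hxd := Finset.HasAntidiagonal.mem_antidiagonal.mp hx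
        have hx0 : x.1 0 + x.2 0 = 11 := by
          have := DFunLike.congr_fun hxd 0; simpa [hd_def] using this
        have hx1 : x.1 1 + x.2 1 = 1 := by
          have := DFunLike.congr_fun hxd 1; simpa [hd_def] using this
        by_cases h6' : x.1 0 + x.1 1 = 6
        · have hne' : ((x.1 0 : ZMod 5)) ≠ (x.1 1 : ZMod 5) := by
            rcases (show x.1 1 = 0 ∨ x.1 1 = 1 by omega) with h | h
            · rw [h, show x.1 0 = 6 by omega]; decide
            · rw [h, show x.1 0 = 5 by omega]; decide
          exact mul_eq_zero_of_left (coeff_zero_of_okSub hP6mem _ hne') _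
        · exact mul_eq_zero_of_left (h6H.coeff_eq_zero (by rw [deg2]; exact h6')) _
      · exact absurd (Finsupp.ext fun i => by
          fin_cases i <;> simp [hm₀_def, ha, hb, hc]) hne
    · exact hprod.coeff_eq_zero (by rw [hddeg]; omega)
  -- the target term
  have htarget : coeff d (C (coeff m₀ g) *
      ((X 0 * X 1) ^ m₀ 0 * (φ (X 1)) ^ m₀ 1 * (φ (X 2)) ^ m₀ 2)) =
      coeff m₀ g * coeff (Finsupp.single 0 10) (φ (X 2)) := by
    have h0 : m₀ 0 = 1 := by simp [hm₀_def]
    have h1 : m₀ 1 = 0 := by simp [hm₀_def]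
    have h2' : m₀ 2 = 1 := by simp [hm₀_def]
    rw [h0, h1, h2', pow_zero, pow_one, pow_one, mul_one, coeff_C_mul,
      show (X 0 * X 1 : AA) = monomial (Finsupp.single 0 1 + Finsupp.single 1 1) 1 from by
        rw [X, X, monomial_mul, one_mul],
      coeff_monomial_mul', if_pos, one_mul]
    · have hsub : d - (Finsupp.single 0 1 + Finsupp.single 1 1) = Finsupp.single (0 : Fin 2) 10 := by
        ext i
        fin_cases i <;> simp [hd_def]
      rw [hsub]
    · intro i
      fin_cases i <;> simp [hd_def]
  rw [Finset.sum_eq_single m₀ hvanish (fun h => by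
      rw [notMem_support_iff.mp h]; simp), htarget] at key
  intro hcon
  rw [hcon, zero_mul] at key
  exact (by decide : (1 : ZMod 11) ≠ 0) key.symm
end

section
/- Let F = ZMod 31, A = F[X,Y], D the unique F-linear derivation of A with D(X) = X^31 and D(Y) = Y^31, and S = Algebra.adjoin F {X*Y, X^5 + Y^5}. Let C = F[Z₂, Z₁₂, Z₂₀, Z₃₀] be a polynomial ring in four variables and χ : C → A an F-algebra homomorphism such that χ(Z₂) = X*Y and χ(Z₁₂), χ(Z₂₀), χ(Z₃₀) ∈ S are homogeneous of total degrees 12, 20, 30 respectively. Then for every g ∈ C with χ(g) = D(X*Y), either the coefficient of the monomial Z₂·Z₃₀ in g is nonzero or the coefficient of the monomial Z₁₂·Z₂₀ in g is nonzero. -/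
open MvPolynomial

private lemma eq_e03 (m : Fin 4 →₀ ℕ) :
    m = Finsupp.single 0 1 + Finsupp.single 3 1 ↔
      m 0 = 1 ∧ m 1 = 0 ∧ m 2 = 0 ∧ m 3 = 1 := by
  constructor
  · rintro rfl
    refine ⟨?_, ?_, ?_, ?_⟩ <;> simp [Finsupp.single_apply]
  · rintro ⟨h0, h1, h2, h3⟩
    ext k
    fin_cases k <;> simp [Finsupp.single_apply, h0, h1, h2, h3]

private lemma eq_e12 (m : Fin 4 →₀ ℕ) :
    m = Finsupp.single 1 1 + Finsupp.single 2 1 ↔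
      m 0 = 0 ∧ m 1 = 1 ∧ m 2 = 1 ∧ m 3 = 0 := by
  constructor
  · rintro rfl
    refine ⟨?_, ?_, ?_, ?_⟩ <;> simp [Finsupp.single_apply]
  · rintro ⟨h0, h1, h2, h3⟩
    ext k
    fin_cases k <;> simp [Finsupp.single_apply, h0, h1, h2, h3]

private lemma deg_mu : Finsupp.degree
    ((Finsupp.single 0 31 + Finsupp.single 1 1 : Fin 2 →₀ ℕ)) = 32 := by
  have h : Finsupp.degree ((Finsupp.single 0 31 + Finsupp.single 1 1 : Fin 2 →₀ ℕ))
      = ∑ i : Fin 2, ((Finsupp.single 0 31 + Finsupp.single 1 1 : Fin 2 →₀ ℕ)) i :=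
    Finset.sum_subset (Finset.subset_univ _)
      (fun x _ hx => Finsupp.notMem_support_iff.mp hx)
  rw [h, Fin.sum_univ_two]
  simp [Finsupp.single_apply]

theorem stmt8
    (D : Derivation (ZMod 31) (MvPolynomial (Fin 2) (ZMod 31)) (MvPolynomial (Fin 2) (ZMod 31)))
    (hDX : D (X 0) = X 0 ^ 31) (hDY : D (X 1) = X 1 ^ 31)
    (χ : MvPolynomial (Fin 4) (ZMod 31) →ₐ[ZMod 31] MvPolynomial (Fin 2) (ZMod 31))
    (h2 : χ (X 0) = X 0 * X 1)
    (h12 : χ (X 1) ∈ Algebra.adjoin (ZMod 31) {X 0 * X 1, X 0 ^ 5 + X 1 ^ 5} ∧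
      (χ (X 1)).IsHomogeneous 12)
    (h20 : χ (X 2) ∈ Algebra.adjoin (ZMod 31) {X 0 * X 1, X 0 ^ 5 + X 1 ^ 5} ∧
      (χ (X 2)).IsHomogeneous 20)
    (h30 : χ (X 3) ∈ Algebra.adjoin (ZMod 31) {X 0 * X 1, X 0 ^ 5 + X 1 ^ 5} ∧
      (χ (X 3)).IsHomogeneous 30)
    (g : MvPolynomial (Fin 4) (ZMod 31)) (hg : χ g = D (X 0 * X 1)) :
    coeff (Finsupp.single (0 : Fin 4) 1 + Finsupp.single 3 1) g ≠ 0 ∨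
      coeff (Finsupp.single (1 : Fin 4) 1 + Finsupp.single 2 1) g ≠ 0 := by
  by_contra hcon
  push_neg at hcon
  obtain ⟨hA, hB⟩ := hcon
  set μ : Fin 2 →₀ ℕ := Finsupp.single 0 31 + Finsupp.single 1 1 with hμdef
  -- the coefficient of X^31 Y in the right hand side is 1
  have hrhs : coeff μ (D (X 0 * X 1)) = 1 := by
    rw [Derivation.leibniz, hDX, hDY, smul_eq_mul, smul_eq_mul]
    have e1 : (X 0 * X 1 ^ 31 : MvPolynomial (Fin 2) (ZMod 31))
        = monomial (Finsupp.single 0 1 + Finsupp.single 1 31) 1 := by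
      rw [X_pow_eq_monomial, X, monomial_mul, mul_one]
    have e2 : (X 1 * X 0 ^ 31 : MvPolynomial (Fin 2) (ZMod 31))
        = monomial μ 1 := by
      rw [X_pow_eq_monomial, X, monomial_mul, mul_one, hμdef, add_comm]
    rw [coeff_add, e1, e2, coeff_monomial, coeff_monomial, if_pos rfl]
    have hne : (Finsupp.single (0 : Fin 2) 1 + Finsupp.single 1 31) ≠ μ := by
      intro h
      have := DFunLike.congr_fun h 0
      simp [hμdef, Finsupp.single_apply] at this
    rw [if_neg hne, zero_add]
  -- the coefficient of X^31 Y in the left hand side is 0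
  have hlhs : coeff μ (χ g) = 0 := by
    conv_lhs => rw [g.as_sum, map_sum, coeff_sum]
    refine Finset.sum_eq_zero fun m _ => ?_
    -- rewrite χ of the monomial
    have hmono : χ (monomial m (coeff m g))
        = C (coeff m g) * ((X 0 * X 1) ^ m 0 * χ (X 1) ^ m 1 * χ (X 2) ^ m 2 * χ (X 3) ^ m 3) := by
      have hm : monomial m (coeff m g)
          = C (coeff m g) * (X 0 ^ m 0 * X 1 ^ m 1 * X 2 ^ m 2 * X 3 ^ m 3) := by
        rw [monomial_eq]
        congr 1
        rw [Finsupp.prod_fintype _ _ (fun i => pow_zero _), Fin.prod_univ_four]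
      rw [hm, map_mul, map_mul, map_mul, map_mul, map_pow, map_pow, map_pow, map_pow, h2]
      congr 1
      have hC : (C (coeff m g) : MvPolynomial (Fin 4) (ZMod 31))
          = algebraMap (ZMod 31) _ (coeff m g) := rfl
      rw [hC, AlgHom.commutes]
      rfl
    rw [hmono, coeff_C_mul]
    by_cases hsp1 : m = Finsupp.single 0 1 + Finsupp.single 3 1
    · rw [hsp1, hA, zero_mul]
    by_cases hsp2 : m = Finsupp.single 1 1 + Finsupp.single 2 1
    · rw [hsp2, hB, zero_mul]
    -- now the coefficient of the product vanishes
    have hprod : coeff μ ((X 0 * X 1) ^ m 0 * χ (X 1) ^ m 1 * χ (X 2) ^ m 2 * χ (X 3) ^ m 3)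
        = 0 := by
      by_cases hdeg : 2 * m 0 + 12 * m 1 + 20 * m 2 + 30 * m 3 = 32
      · -- degree 32 case: m 0 ≥ 2 since m is not one of the two special monomials
        have h0 : 2 ≤ m 0 := by
          rw [eq_e03 m] at hsp1
          rw [eq_e12 m] at hsp2
          by_contra h
          push_neg at h
          -- enumerate solutions of 2 a + 12 b + 20 c + 30 d = 32 with a ≤ 1
          rcases (by omega : m 0 = 0 ∨ m 0 = 1) with h00 | h00
          · exact hsp2 ⟨h00, by omega, by omega, by omega⟩
          · exact hsp1 ⟨h00, by omega, by omega, by omega⟩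
        obtain ⟨k, hk⟩ : ∃ k, m 0 = k + 2 := ⟨m 0 - 2, by omega⟩
        have hfact : (X 0 * X 1 : MvPolynomial (Fin 2) (ZMod 31)) ^ m 0
              * χ (X 1) ^ m 1 * χ (X 2) ^ m 2 * χ (X 3) ^ m 3
            = X 1 * (X 1 * ((X 0 ^ (k + 2) * X 1 ^ k)
              * (χ (X 1) ^ m 1 * χ (X 2) ^ m 2 * χ (X 3) ^ m 3))) := by
          rw [hk]; ring
        rw [hfact]
        have hμ1 : μ = Finsupp.single 1 1 + Finsupp.single 0 31 := by
          rw [hμdef, add_comm]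
        rw [hμ1, coeff_X_mul, coeff_X_mul']
        rw [if_neg (by simp [Finsupp.single_apply])]
      · -- degree mismatch case
        have hXY : (X 0 * X 1 : MvPolynomial (Fin 2) (ZMod 31)).IsHomogeneous 2 :=
          (isHomogeneous_X _ 0).mul (isHomogeneous_X _ 1)
        have hhom : ((X 0 * X 1 : MvPolynomial (Fin 2) (ZMod 31)) ^ m 0
              * χ (X 1) ^ m 1 * χ (X 2) ^ m 2 * χ (X 3) ^ m 3).IsHomogeneous
            (2 * m 0 + 12 * m 1 + 20 * m 2 + 30 * m 3) := by
          have h' := (((hXY.pow (m 0)).mul (h12.2.pow (m 1))).mul (h20.2.pow (m 2))).mul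
            (h30.2.pow (m 3))
          convert h' using 2
        exact hhom.coeff_eq_zero (by rw [hμdef, deg_mu]; omega)
    rw [hprod, mul_zero]
  rw [hg, hrhs] at hlhs
  exact absurd hlhs (by decide)
end

section
/- Let F = ZMod 23 and A = F[t₁,…,t₅]. Let c₅ = t₁t₂t₃t₄t₅ and let p_k (1 ≤ k ≤ 4) be the k-th elementary symmetric polynomial in t₁²,…,t₅². Then every element of Algebra.adjoin F {p₁,p₂,p₃,p₄,c₅} that is homogeneous of total degree 9 is an F-linear combination of p₁²·c₅ and p₂·c₅. -/
open MvPolynomial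

/-- The `k`-th elementary symmetric polynomial in `t₁², …, t₅²` over `ZMod 23`. -/
noncomputable def pSpin (k : ℕ) : MvPolynomial (Fin 5) (ZMod 23) :=
  ∑ s ∈ Finset.powersetCard k Finset.univ, ∏ i ∈ s, (X i) ^ 2

/-- `c₅ = t₁t₂t₃t₄t₅` over `ZMod 23`. -/
noncomputable def cSpin : MvPolynomial (Fin 5) (ZMod 23) := ∏ i, X i

lemma pSpin_hom (k : ℕ) : (pSpin k).IsHomogeneous (2 * k) := by
  apply MvPolynomial.IsHomogeneous.sum
  intro s hs
  have : ((∏ i ∈ s, (X i : MvPolynomial (Fin 5) (ZMod 23)) ^ 2)).IsHomogeneous (∑ _i ∈ s, 2) :=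
    MvPolynomial.IsHomogeneous.prod s _ _ (fun i _ => (MvPolynomial.isHomogeneous_X _ i).pow 2)
  simpa [Finset.sum_const, (Finset.mem_powersetCard.mp hs).2, mul_comm] using this

lemma cSpin_hom : cSpin.IsHomogeneous 5 := by
  have : (cSpin).IsHomogeneous (∑ _i : Fin 5, 1) :=
    MvPolynomial.IsHomogeneous.prod Finset.univ _ _
      (fun i _ => MvPolynomial.isHomogeneous_X _ i)
  simpa using this

noncomputable def gSpin : Fin 5 → MvPolynomial (Fin 5) (ZMod 23) :=
  ![pSpin 1, pSpin 2, pSpin 3, pSpin 4, cSpin]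

def wSpin : Fin 5 → ℕ := ![2, 4, 6, 8, 5]

lemma gSpin_hom (i : Fin 5) : (gSpin i).IsHomogeneous (wSpin i) := by
  fin_cases i
  · simpa [gSpin, wSpin] using pSpin_hom 1
  · simpa [gSpin, wSpin] using pSpin_hom 2
  · simpa [gSpin, wSpin] using pSpin_hom 3
  · simpa [gSpin, wSpin] using pSpin_hom 4
  · simpa [gSpin, wSpin] using cSpin_hom

theorem stmt12 (d : MvPolynomial (Fin 5) (ZMod 23))
    (hd : d ∈ Algebra.adjoin (ZMod 23) {pSpin 1, pSpin 2, pSpin 3, pSpin 4, cSpin})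
    (hhom : d.IsHomogeneous 9) :
    ∃ a b : ZMod 23, d = C a * pSpin 1 ^ 2 * cSpin + C b * pSpin 2 * cSpin := by
  -- step 1: d is in the range of aeval gSpin
  have hrange : d ∈ (MvPolynomial.aeval (R := ZMod 23) gSpin).range := by
    refine Algebra.adjoin_le ?_ hd
    rintro x (rfl | rfl | rfl | rfl | rfl)
    · exact ⟨X 0, by simp [gSpin]⟩
    · exact ⟨X 1, by simp [gSpin]⟩
    · exact ⟨X 2, by simp [gSpin]⟩
    · exact ⟨X 3, by simp [gSpin]⟩
    · exact ⟨X 4, by simp [gSpin]⟩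
  obtain ⟨P, hP'⟩ := hrange
  have hP : (MvPolynomial.aeval (R := ZMod 23) gSpin) P = d := hP'
  -- step 2: membership in span
  have hspan : d ∈ Submodule.span (ZMod 23)
      ({pSpin 1 ^ 2 * cSpin, pSpin 2 * cSpin} : Set (MvPolynomial (Fin 5) (ZMod 23))) := by
    have hd9 : d = homogeneousComponent 9 d := by
      rw [homogeneousComponent_of_mem (mem_homogeneousSubmodule 9 d |>.mpr hhom)]
      simp
    rw [hd9, ← hP, aeval_def, eval₂_eq]
    rw [map_sum]
    refine Submodule.sum_mem _ ?_
    intro m _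
    have hterm : ((algebraMap (ZMod 23) (MvPolynomial (Fin 5) (ZMod 23))) (P.coeff m) *
        ∏ i, gSpin i ^ m i).IsHomogeneous (0 + ∑ i, wSpin i * m i) := by
      refine (MvPolynomial.isHomogeneous_C _ _).mul ?_
      exact MvPolynomial.IsHomogeneous.prod Finset.univ _ _
        (fun i _ => (gSpin_hom i).pow (m i))
    have hps : (∏ i ∈ m.support, gSpin i ^ m i) = ∏ i : Fin 5, gSpin i ^ m i :=
      Finset.prod_subset (Finset.subset_univ _)
        (fun i _ hi => by simp [Finsupp.notMem_support_iff.mp hi])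
    rw [hps, homogeneousComponent_of_mem ((mem_homogeneousSubmodule _ _).mpr hterm)]
    split_ifs with h9
    · -- weight equation
      have hw : 2 * m 0 + 4 * m 1 + 6 * m 2 + 8 * m 3 + 5 * m 4 = 9 := by
        have := h9.symm
        simpa [wSpin, Fin.sum_univ_five, mul_comm] using this
      have hcases : (m 0 = 2 ∧ m 1 = 0 ∧ m 2 = 0 ∧ m 3 = 0 ∧ m 4 = 1) ∨
          (m 0 = 0 ∧ m 1 = 1 ∧ m 2 = 0 ∧ m 3 = 0 ∧ m 4 = 1) := by omega
      have hprod : (∏ i, gSpin i ^ m i) =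
          gSpin 0 ^ m 0 * gSpin 1 ^ m 1 * gSpin 2 ^ m 2 * gSpin 3 ^ m 3 * gSpin 4 ^ m 4 :=
        Fin.prod_univ_five _
      rcases hcases with ⟨h0, h1, h2, h3, h4⟩ | ⟨h0, h1, h2, h3, h4⟩
      · have : (algebraMap (ZMod 23) (MvPolynomial (Fin 5) (ZMod 23))) (P.coeff m) *
            ∏ i, gSpin i ^ m i = (P.coeff m) • (pSpin 1 ^ 2 * cSpin) := by
          rw [hprod, h0, h1, h2, h3, h4]
          simp [gSpin, Algebra.smul_def, mul_assoc]
        rw [this]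
        exact Submodule.smul_mem _ _ (Submodule.subset_span (by simp))
      · have : (algebraMap (ZMod 23) (MvPolynomial (Fin 5) (ZMod 23))) (P.coeff m) *
            ∏ i, gSpin i ^ m i = (P.coeff m) • (pSpin 2 * cSpin) := by
          rw [hprod, h0, h1, h2, h3, h4]
          simp [gSpin, Algebra.smul_def, mul_assoc]
        rw [this]
        exact Submodule.smul_mem _ _ (Submodule.subset_span (by simp))
    · exact Submodule.zero_mem _
  rw [Submodule.mem_span_pair] at hspan
  obtain ⟨a, b, hab⟩ := hspan
  refine ⟨a, b, ?_⟩
  rw [← hab]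
  simp [Algebra.smul_def, algebraMap_eq, mul_assoc]
end

section
/- Let F = ZMod 37 and A = F[t₁,…,t₈]. Let c_k be the k-th elementary symmetric polynomial in t₁,…,t₈ and p_k the k-th elementary symmetric polynomial in t₁²,…,t₈². Set h₂ = (3·2⁻¹)c₃, h₃ = −2⁻¹(5c₅ + c₂c₃), h₄ = 2⁻¹(7c₇ + 3c₂c₅ − c₃c₄), h₅ = −2⁻¹(5c₂c₇ − 3c₃c₆ + c₄c₅), h₆ = −2⁻¹(5c₃c₈ − 3c₄c₇ + c₅c₆), h₇ = 2⁻¹(3c₅c₈ − c₆c₇). Let φ : A → A be an F-algebra homomorphism with φ(c₁) = −c₁, φ(c₂) = c₂, φ(c₈) = c₈ − 4⁻¹c₁c₇, and φ(p_i) ≡ p_i + c₁·h_i modulo the ideal (c₁²) for i = 2,…,7. Then, modulo the ideal (c₁², c₂): φ(p₂²p₃) ≡ p₂²p₃ + c₁(6c₃³c₄ − 12c₃c₄c₆ − 10c₄²c₅); φ(p₂p₅) ≡ p₂p₅ + c₁(3c₃²c₇ + (3·2⁻¹)c₃c₅² − c₄²c₅); φ(p₃c₈) ≡ p₃c₈ +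 c₁(−4⁻¹c₃²c₇ − (5·2⁻¹)c₅c₈ + 2⁻¹c₆c₇); and φ(p₃p₄) ≡ p₃p₄ + c₁(−2⁻¹c₃³c₄ + (7·2⁻¹)c₃²c₇ + c₃c₄c₆ + 5c₃c₅² − (5·2⁻¹)c₄²c₅ − 5c₅c₈ − 7c₆c₇). -/
open MvPolynomial

/-- The `k`-th elementary symmetric polynomial in `t₁, …, t₈` over `ZMod 37`. -/
noncomputable def cE8 (k : ℕ) : MvPolynomial (Fin 8) (ZMod 37) :=
  ∑ s ∈ Finset.powersetCard k Finset.univ, ∏ i ∈ s, X i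

/-- The `k`-th elementary symmetric polynomial in `t₁², …, t₈²` over `ZMod 37`. -/
noncomputable def pE8 (k : ℕ) : MvPolynomial (Fin 8) (ZMod 37) :=
  ∑ s ∈ Finset.powersetCard k Finset.univ, ∏ i ∈ s, (X i) ^ 2

/-- The polynomials `h₂, …, h₇` of Hamanaka–Kono. -/
noncomputable def hE8 : ℕ → MvPolynomial (Fin 8) (ZMod 37)
  | 2 => C (3 * (2 : ZMod 37)⁻¹) * cE8 3
  | 3 => -C (2 : ZMod 37)⁻¹ * (5 * cE8 5 + cE8 2 * cE8 3)
  | 4 => C (2 : ZMod 37)⁻¹ * (7 * cE8 7 + 3 * cE8 2 * cE8 5 - cE8 3 * cE8 4)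
  | 5 => -C (2 : ZMod 37)⁻¹ * (5 * cE8 2 * cE8 7 - 3 * cE8 3 * cE8 6 + cE8 4 * cE8 5)
  | 6 => -C (2 : ZMod 37)⁻¹ * (5 * cE8 3 * cE8 8 - 3 * cE8 4 * cE8 7 + cE8 5 * cE8 6)
  | 7 => C (2 : ZMod 37)⁻¹ * (3 * cE8 5 * cE8 8 - cE8 6 * cE8 7)
  | _ => 0


namespace StmtAux

noncomputable abbrev AA := MvPolynomial (Fin 8) (ZMod 37)

lemma cE8_esymm (k : ℕ) : (Finset.univ.val.map (X : Fin 8 → AA)).esymm k = cE8 k := by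
  rw [Finset.esymm_map_val]; rfl

lemma pE8_esymm (k : ℕ) : (Finset.univ.val.map (fun i => (X i : AA) ^ 2)).esymm k = pE8 k := by
  rw [Finset.esymm_map_val]; rfl

lemma cE8neg_esymm (k : ℕ) :
    (Finset.univ.val.map (fun i => -(X i : AA))).esymm k = (-1) ^ k * cE8 k := by
  have h : Finset.univ.val.map (fun i => -(X i : AA))
      = Multiset.map Neg.neg (Finset.univ.val.map (X : Fin 8 → AA)) := by
    rw [Multiset.map_map]; rfl
  rw [h, Multiset.esymm_neg, cE8_esymm]

lemma pE8neg_esymm (k : ℕ) :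
    (Finset.univ.val.map (fun i => -(X i : AA) ^ 2)).esymm k = (-1) ^ k * pE8 k := by
  have h : Finset.univ.val.map (fun i => -(X i : AA) ^ 2)
      = Multiset.map Neg.neg (Finset.univ.val.map (fun i => (X i : AA) ^ 2)) := by
    rw [Multiset.map_map]; rfl
  rw [h, Multiset.esymm_neg, pE8_esymm]

lemma expand8 (f : Fin 8 → AA) :
    (∏ i : Fin 8, (Polynomial.X + Polynomial.C (f i))) =
      ∑ j ∈ Finset.range 9, Polynomial.C ((Finset.univ.val.map f).esymm j) * Polynomial.X ^ (8 - j) := by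
  have h := Multiset.prod_X_add_C_eq_sum_esymm (Finset.univ.val.map f)
  rw [Multiset.map_map] at h
  have hc : Multiset.card (Finset.univ.val.map f) = 8 := by simp
  rw [hc] at h
  rw [← h]; rfl

lemma master :
    (∑ j ∈ Finset.range 9, Polynomial.C ((-1 : AA) ^ j * pE8 j) * Polynomial.X ^ (2 * (8 - j))) =
      (∑ i ∈ Finset.range 9, Polynomial.C (cE8 i) * Polynomial.X ^ (8 - i)) *
      (∑ j ∈ Finset.range 9, Polynomial.C ((-1 : AA) ^ j * cE8 j) * Polynomial.X ^ (8 - j)) := by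
  have hps := expand8 (fun i => -(X i : AA) ^ 2)
  have hq := expand8 (X : Fin 8 → AA)
  have hqn := expand8 (fun i => -(X i : AA))
  simp only [pE8neg_esymm] at hps
  simp only [cE8_esymm] at hq
  simp only [cE8neg_esymm] at hqn
  have key : (Polynomial.aeval (Polynomial.X ^ 2 : Polynomial AA))
      (∏ i : Fin 8, (Polynomial.X + Polynomial.C (-(X i : AA) ^ 2))) =
      (∏ i : Fin 8, (Polynomial.X + Polynomial.C (X i : AA))) *
      (∏ i : Fin 8, (Polynomial.X + Polynomial.C (-(X i : AA)))) := by
    rw [map_prod, ← Finset.prod_mul_distrib]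
    refine Finset.prod_congr rfl fun i _ => ?_
    rw [map_add, Polynomial.aeval_X, Polynomial.aeval_C, Polynomial.algebraMap_eq,
      map_neg, map_neg, map_pow]
    ring
  rw [hps, hq, hqn] at key
  rw [map_sum] at key
  simp only [map_mul, Polynomial.aeval_C, Polynomial.algebraMap_eq, map_pow,
    Polynomial.aeval_X, ← pow_mul] at key
  simpa only [map_mul, map_pow, map_neg, map_one] using key

lemma cE8_zero : cE8 0 = 1 := by simp [cE8]

lemma aux_mul (a b : AA) (p q : ℕ) :
    (Polynomial.C a * Polynomial.X ^ p) * (Polynomial.C b * Polynomial.X ^ q) =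
      Polynomial.C (a * b) * Polynomial.X ^ (p + q) := by
  rw [map_mul, pow_add]; ring

lemma lp2 : pE8 2 = cE8 2 ^ 2 - 2 * cE8 1 * cE8 3 + 2 * cE8 4 := by
  have h := congrArg (fun p => Polynomial.coeff p 12) master
  simp only [Finset.sum_range_succ, Finset.sum_range_zero, zero_add, add_mul, mul_add,
    aux_mul, Polynomial.coeff_add, Polynomial.coeff_C_mul, Polynomial.coeff_X_pow] at h
  norm_num [cE8_zero] at h
  linear_combination h

lemma lp3 : pE8 3 = cE8 3 ^ 2 - 2 * cE8 2 * cE8 4 + 2 * cE8 1 * cE8 5 - 2 * cE8 6 := by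
  have h := congrArg (fun p => Polynomial.coeff p 10) master
  simp only [Finset.sum_range_succ, Finset.sum_range_zero, zero_add, add_mul, mul_add,
    aux_mul, Polynomial.coeff_add, Polynomial.coeff_C_mul, Polynomial.coeff_X_pow] at h
  norm_num [cE8_zero] at h
  linear_combination -h

lemma lp4 : pE8 4 = cE8 4 ^ 2 - 2 * cE8 3 * cE8 5 + 2 * cE8 2 * cE8 6 - 2 * cE8 1 * cE8 7
    + 2 * cE8 8 := by
  have h := congrArg (fun p => Polynomial.coeff p 8) master
  simp only [Finset.sum_range_succ, Finset.sum_range_zero, zero_add, add_mul, mul_add,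
    aux_mul, Polynomial.coeff_add, Polynomial.coeff_C_mul, Polynomial.coeff_X_pow] at h
  norm_num [cE8_zero] at h
  linear_combination h

lemma lp5 : pE8 5 = cE8 5 ^ 2 - 2 * cE8 4 * cE8 6 + 2 * cE8 3 * cE8 7 - 2 * cE8 2 * cE8 8 := by
  have h := congrArg (fun p => Polynomial.coeff p 6) master
  simp only [Finset.sum_range_succ, Finset.sum_range_zero, zero_add, add_mul, mul_add,
    aux_mul, Polynomial.coeff_add, Polynomial.coeff_C_mul, Polynomial.coeff_X_pow] at h
  norm_num [cE8_zero] at h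
  linear_combination -h

lemma i2 : (2 : ZMod 37)⁻¹ = 19 := by
  have h : (2 : ZMod 37) * 19 = 1 := by decide
  haveI : Fact (Nat.Prime 37) := ⟨by norm_num⟩
  exact inv_eq_of_mul_eq_one_right h

lemma i4 : (4 : ZMod 37)⁻¹ = 28 := by
  have h : (4 : ZMod 37) * 28 = 1 := by decide
  haveI : Fact (Nat.Prime 37) := ⟨by norm_num⟩
  exact inv_eq_of_mul_eq_one_right h

lemma he2 : hE8 2 = 20 * cE8 3 := by
  have h : MvPolynomial.C (3 * (2 : ZMod 37)⁻¹) = (20 : AA) := by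
    rw [show (3 * (2 : ZMod 37)⁻¹) = 20 from by rw [i2]; decide, map_ofNat]
  simp only [hE8, h]

lemma he3 : hE8 3 = 18 * (5 * cE8 5 + cE8 2 * cE8 3) := by
  have h : -(MvPolynomial.C ((2 : ZMod 37)⁻¹)) = (18 : AA) := by
    rw [i2, ← map_neg,
      show -(19 : ZMod 37) = 18 from by decide, map_ofNat]
  simp only [hE8, h]

lemma he4 : hE8 4 = 19 * (7 * cE8 7 + 3 * cE8 2 * cE8 5 - cE8 3 * cE8 4) := by
  have h : MvPolynomial.C ((2 : ZMod 37)⁻¹) = (19 : AA) := by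
    rw [i2, map_ofNat]
  simp only [hE8, h]

lemma he5 : hE8 5 = 18 * (5 * cE8 2 * cE8 7 - 3 * cE8 3 * cE8 6 + cE8 4 * cE8 5) := by
  have h : -(MvPolynomial.C ((2 : ZMod 37)⁻¹)) = (18 : AA) := by
    rw [i2, ← map_neg,
      show -(19 : ZMod 37) = 18 from by decide, map_ofNat]
  simp only [hE8, h]

lemma k19 : MvPolynomial.C ((2 : ZMod 37)⁻¹) = (19 : AA) := by
  rw [i2, map_ofNat]

lemma k20 : MvPolynomial.C (3 * (2 : ZMod 37)⁻¹) = (20 : AA) := by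
  rw [show (3 * (2 : ZMod 37)⁻¹) = 20 from by rw [i2]; decide, map_ofNat]

lemma k21 : MvPolynomial.C (5 * (2 : ZMod 37)⁻¹) = (21 : AA) := by
  rw [show (5 * (2 : ZMod 37)⁻¹) = 21 from by rw [i2]; decide, map_ofNat]

lemma k22 : MvPolynomial.C (7 * (2 : ZMod 37)⁻¹) = (22 : AA) := by
  rw [show (7 * (2 : ZMod 37)⁻¹) = 22 from by rw [i2]; decide, map_ofNat]

lemma k28 : MvPolynomial.C ((4 : ZMod 37)⁻¹) = (28 : AA) := by
  rw [i4, map_ofNat]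

lemma h37 : (37 : AA) = 0 := by
  rw [show (37 : AA) = ((37 : ℕ) : AA) from by norm_cast]
  exact CharP.cast_eq_zero AA 37

end StmtAux

open StmtAux in
set_option maxHeartbeats 2000000 in
theorem stmt13
    (φ : MvPolynomial (Fin 8) (ZMod 37) →ₐ[ZMod 37] MvPolynomial (Fin 8) (ZMod 37))
    (hc1 : φ (cE8 1) = -cE8 1) (hc2 : φ (cE8 2) = cE8 2)
    (hc8 : φ (cE8 8) = cE8 8 - C (4 : ZMod 37)⁻¹ * cE8 1 * cE8 7)
    (hp : ∀ i, 2 ≤ i → i ≤ 7 →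
      φ (pE8 i) - (pE8 i + cE8 1 * hE8 i) ∈ Ideal.span {cE8 1 ^ 2}) :
    (φ (pE8 2 ^ 2 * pE8 3) -
        (pE8 2 ^ 2 * pE8 3 +
          cE8 1 * (6 * cE8 3 ^ 3 * cE8 4 - 12 * cE8 3 * cE8 4 * cE8 6 -
            10 * cE8 4 ^ 2 * cE8 5)) ∈ Ideal.span {cE8 1 ^ 2, cE8 2}) ∧
    (φ (pE8 2 * pE8 5) -
        (pE8 2 * pE8 5 +
          cE8 1 * (3 * cE8 3 ^ 2 * cE8 7 + C (3 * (2 : ZMod 37)⁻¹) * cE8 3 * cE8 5 ^ 2 -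
            cE8 4 ^ 2 * cE8 5)) ∈ Ideal.span {cE8 1 ^ 2, cE8 2}) ∧
    (φ (pE8 3 * cE8 8) -
        (pE8 3 * cE8 8 +
          cE8 1 * (-C (4 : ZMod 37)⁻¹ * cE8 3 ^ 2 * cE8 7 -
            C (5 * (2 : ZMod 37)⁻¹) * cE8 5 * cE8 8 +
            C (2 : ZMod 37)⁻¹ * cE8 6 * cE8 7)) ∈ Ideal.span {cE8 1 ^ 2, cE8 2}) ∧
    (φ (pE8 3 * pE8 4) -
        (pE8 3 * pE8 4 +
          cE8 1 * (-C (2 : ZMod 37)⁻¹ * cE8 3 ^ 3 * cE8 4 +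
            C (7 * (2 : ZMod 37)⁻¹) * cE8 3 ^ 2 * cE8 7 + cE8 3 * cE8 4 * cE8 6 +
            5 * cE8 3 * cE8 5 ^ 2 - C (5 * (2 : ZMod 37)⁻¹) * cE8 4 ^ 2 * cE8 5 -
            5 * cE8 5 * cE8 8 - 7 * cE8 6 * cE8 7)) ∈ Ideal.span {cE8 1 ^ 2, cE8 2}) := by
  have hmem : ∀ u v : MvPolynomial (Fin 8) (ZMod 37),
      u * cE8 1 ^ 2 + v * cE8 2 ∈ Ideal.span {cE8 1 ^ 2, cE8 2} := fun u v =>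
    Ideal.add_mem _ (Ideal.mul_mem_left _ _ (Ideal.subset_span (by simp)))
      (Ideal.mul_mem_left _ _ (Ideal.subset_span (by simp)))
  have hsub : Ideal.span {cE8 1 ^ 2} ≤ Ideal.span {cE8 1 ^ 2, cE8 2} :=
    Ideal.span_mono (by simp)
  have hmk : ∀ i, 2 ≤ i → i ≤ 7 →
      Ideal.Quotient.mk (Ideal.span {cE8 1 ^ 2, cE8 2}) (φ (pE8 i)) =
      Ideal.Quotient.mk (Ideal.span {cE8 1 ^ 2, cE8 2}) (pE8 i + cE8 1 * hE8 i) :=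
    fun i hi hi' => Ideal.Quotient.eq.mpr (hsub (hp i hi hi'))
  refine ⟨?_, ?_, ?_, ?_⟩
  · rw [← Ideal.Quotient.eq]
    have e : Ideal.Quotient.mk (Ideal.span {cE8 1 ^ 2, cE8 2}) (φ (pE8 2 ^ 2 * pE8 3)) =
        Ideal.Quotient.mk (Ideal.span {cE8 1 ^ 2, cE8 2}) ((pE8 2 + cE8 1 * hE8 2) ^ 2 * (pE8 3 + cE8 1 * hE8 3)) := by
      rw [map_mul, map_pow, map_mul, map_pow, hmk 2 (by norm_num) (by norm_num), hmk 3 (by norm_num) (by norm_num), ← map_pow, ← map_mul]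
    rw [e, Ideal.Quotient.eq]
    have key : ((pE8 2 + cE8 1 * hE8 2) ^ 2 * (pE8 3 + cE8 1 * hE8 3)) -
        (pE8 2 ^ 2 * pE8 3 + cE8 1 * (6 * cE8 3 ^ 3 * cE8 4 - 12 * cE8 3 * cE8 4 * cE8 6 - 10 * cE8 4 ^ 2 * cE8 5)) =
        ((6640) * cE8 3 * cE8 4 * cE8 5 + (-640) * cE8 3 ^ 2 * cE8 6 + (320) * cE8 3 ^ 4 + (656) * cE8 2 * cE8 3 ^ 2 * cE8 4 + (3320) * cE8 2 ^ 2 * cE8 3 * cE8 5 + (648) * cE8 2 ^ 3 * cE8 3 ^ 2 + (29800) * cE8 1 * cE8 3 ^ 2 * cE8 5 + (5832) * cE8 1 * cE8 2 * cE8 3 ^ 3) * cE8 1 ^ 2 +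
        ((-88) * cE8 1 * cE8 3 * cE8 4 ^ 2 + (360) * cE8 1 * cE8 2 * cE8 4 * cE8 5 + (-80) * cE8 1 * cE8 2 * cE8 3 * cE8 6 + (40) * cE8 1 * cE8 2 * cE8 3 ^ 3 + (-8) * cE8 1 * cE8 2 ^ 2 * cE8 3 * cE8 4 + (90) * cE8 1 * cE8 2 ^ 3 * cE8 5 + (18) * cE8 1 * cE8 2 ^ 4 * cE8 3) * cE8 2 := by
      rw [he2, he3, lp2, lp3]
      linear_combination (((10) * cE8 1 * cE8 4 ^ 2 * cE8 5 + (-4) * cE8 1 * cE8 3 * cE8 4 * cE8 6 + (2) * cE8 1 * cE8 3 ^ 3 * cE8 4)) * h37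
    rw [key]
    exact hmem _ _
  · rw [← Ideal.Quotient.eq]
    have e : Ideal.Quotient.mk (Ideal.span {cE8 1 ^ 2, cE8 2}) (φ (pE8 2 * pE8 5)) =
        Ideal.Quotient.mk (Ideal.span {cE8 1 ^ 2, cE8 2}) ((pE8 2 + cE8 1 * hE8 2) * (pE8 5 + cE8 1 * hE8 5)) := by
      rw [map_mul, map_mul, hmk 2 (by norm_num) (by norm_num), hmk 5 (by norm_num) (by norm_num), ← map_mul]
    rw [e, Ideal.Quotient.eq]
    have key : ((pE8 2 + cE8 1 * hE8 2) * (pE8 5 + cE8 1 * hE8 5)) -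
        (pE8 2 * pE8 5 + cE8 1 * (3 * cE8 3 ^ 2 * cE8 7 + C (3 * (2 : ZMod 37)⁻¹) * cE8 3 * cE8 5 ^ 2 - cE8 4 ^ 2 * cE8 5)) =
        ((324) * cE8 3 * cE8 4 * cE8 5 + (-972) * cE8 3 ^ 2 * cE8 6 + (1620) * cE8 2 * cE8 3 * cE8 7) * cE8 1 ^ 2 +
        ((180) * cE8 1 * cE8 4 * cE8 7 + (-40) * cE8 1 * cE8 3 * cE8 8 + (18) * cE8 1 * cE8 2 * cE8 4 * cE8 5 + (-54) * cE8 1 * cE8 2 * cE8 3 * cE8 6 + (90) * cE8 1 * cE8 2 ^ 2 * cE8 7) * cE8 2 := by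
      rw [he2, he5, lp2, lp5, k20]
      linear_combination (((1) * cE8 1 * cE8 4 ^ 2 * cE8 5 + (-4) * cE8 1 * cE8 3 * cE8 4 * cE8 6 + (1) * cE8 1 * cE8 3 ^ 2 * cE8 7)) * h37
    rw [key]
    exact hmem _ _
  · rw [← Ideal.Quotient.eq]
    have e : Ideal.Quotient.mk (Ideal.span {cE8 1 ^ 2, cE8 2}) (φ (pE8 3 * cE8 8)) =
        Ideal.Quotient.mk (Ideal.span {cE8 1 ^ 2, cE8 2}) ((pE8 3 + cE8 1 * hE8 3) * (cE8 8 - C (4 : ZMod 37)⁻¹ * cE8 1 * cE8 7)) := by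
      rw [map_mul, map_mul, hc8, hmk 3 (by norm_num) (by norm_num), ← map_mul]
    rw [e, Ideal.Quotient.eq]
    have key : ((pE8 3 + cE8 1 * hE8 3) * (cE8 8 - C (4 : ZMod 37)⁻¹ * cE8 1 * cE8 7)) -
        (pE8 3 * cE8 8 + cE8 1 * (-C (4 : ZMod 37)⁻¹ * cE8 3 ^ 2 * cE8 7 - C (5 * (2 : ZMod 37)⁻¹) * cE8 5 * cE8 8 + C (2 : ZMod 37)⁻¹ * cE8 6 * cE8 7)) =
        ((-2576) * cE8 5 * cE8 7 + (-504) * cE8 2 * cE8 3 * cE8 7) * cE8 1 ^ 2 +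
        ((56) * cE8 1 * cE8 4 * cE8 7 + (18) * cE8 1 * cE8 3 * cE8 8) * cE8 2 := by
      rw [he3, lp3, k28, k21, k19]
      linear_combination (((1) * cE8 1 * cE8 6 * cE8 7 + (3) * cE8 1 * cE8 5 * cE8 8)) * h37
    rw [key]
    exact hmem _ _
  · rw [← Ideal.Quotient.eq]
    have e : Ideal.Quotient.mk (Ideal.span {cE8 1 ^ 2, cE8 2}) (φ (pE8 3 * pE8 4)) =
        Ideal.Quotient.mk (Ideal.span {cE8 1 ^ 2, cE8 2}) ((pE8 3 + cE8 1 * hE8 3) * (pE8 4 + cE8 1 * hE8 4)) := by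
      rw [map_mul, map_mul, hmk 3 (by norm_num) (by norm_num), hmk 4 (by norm_num) (by norm_num), ← map_mul]
    rw [e, Ideal.Quotient.eq]
    have key : ((pE8 3 + cE8 1 * hE8 3) * (pE8 4 + cE8 1 * hE8 4)) -
        (pE8 3 * pE8 4 + cE8 1 * (-C (2 : ZMod 37)⁻¹ * cE8 3 ^ 3 * cE8 4 + C (7 * (2 : ZMod 37)⁻¹) * cE8 3 ^ 2 * cE8 7 + cE8 3 * cE8 4 * cE8 6 + 5 * cE8 3 * cE8 5 ^ 2 - C (5 * (2 : ZMod 37)⁻¹) * cE8 4 ^ 2 * cE8 5 - 5 * cE8 5 * cE8 8 - 7 * cE8 6 * cE8 7)) =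
        ((12056) * cE8 5 * cE8 7 + (-1748) * cE8 3 * cE8 4 * cE8 5 + (5244) * cE8 2 * cE8 5 ^ 2 + (2358) * cE8 2 * cE8 3 * cE8 7 + (-342) * cE8 2 * cE8 3 ^ 2 * cE8 4 + (1026) * cE8 2 ^ 2 * cE8 3 * cE8 5) * cE8 1 ^ 2 +
        ((66) * cE8 1 * cE8 5 * cE8 6 + (-266) * cE8 1 * cE8 4 * cE8 7 + (36) * cE8 1 * cE8 3 * cE8 8 + (56) * cE8 1 * cE8 3 * cE8 4 ^ 2 + (21) * cE8 1 * cE8 3 ^ 2 * cE8 5 + (-114) * cE8 1 * cE8 2 * cE8 4 * cE8 5 + (36) * cE8 1 * cE8 2 * cE8 3 * cE8 6) * cE8 2 := by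
      rw [he3, he4, lp3, lp4, k19, k22, k21]
      linear_combination (((-7) * cE8 1 * cE8 6 * cE8 7 + (5) * cE8 1 * cE8 5 * cE8 8 + (3) * cE8 1 * cE8 4 ^ 2 * cE8 5 + (-5) * cE8 1 * cE8 3 * cE8 5 ^ 2 + (1) * cE8 1 * cE8 3 * cE8 4 * cE8 6 + (3) * cE8 1 * cE8 3 ^ 2 * cE8 7)) * h37
    rw [key]
    exact hmem _ _
end

section
/- Let F = ZMod 37 and A = F[t₁,…,t₈]. Let c_k be the k-th elementary symmetric polynomial in t₁,…,t₈ and p_k the k-th elementary symmetric polynomial in t₁²,…,t₈². Set h₂ = (3·2⁻¹)c₃, h₃ = −2⁻¹(5c₅ + c₂c₃), h₄ = 2⁻¹(7c₇ + 3c₂c₅ − c₃c₄), h₅ = −2⁻¹(5c₂c₇ − 3c₃c₆ + c₄c₅), h₆ = −2⁻¹(5c₃c₈ − 3c₄c₇ + c₅c₆), h₇ = 2⁻¹(3c₅c₈ − c₆c₇). Let φ : A → A be an F-algebra homomorphism with φ(c₁) = −c₁, φ(c₂) = c₂, φ(c₈) = c₈ − 4⁻¹c₁c₇, and φ(p_i)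 ≡ p_i + c₁·h_i modulo the ideal (c₁²) for i = 2,…,7. If d ∈ Algebra.adjoin F {p₁,…,p₇,c₈} is homogeneous of total degree 14 and φ(d) ≡ d modulo the ideal (c₁², c₂), then there exists a ∈ F such that d ≡ a·(480p₇ − p₂²p₃ + 40p₂p₅ − 12p₃p₄ + 312p₃c₈) modulo the ideal (p₁). -/
open MvPolynomial

set_option maxRecDepth 8000
set_option maxHeartbeats 1000000

abbrev A37 := MvPolynomial (Fin 8) (ZMod 37)

lemma i2E : (2 : ZMod 37)⁻¹ = 19 := by
  have h := ZMod.inv_mul_of_unit (2 : ZMod 37) ⟨⟨2, 19, by decide, by decide⟩, rfl⟩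
  calc (2 : ZMod 37)⁻¹ = 2⁻¹ * (2 * 19) := by
        rw [show ((2:ZMod 37) * 19) = 1 from by decide, mul_one]
  _ = (2⁻¹ * 2) * 19 := by ring
  _ = 19 := by rw [h, one_mul]

lemma i4E : (4 : ZMod 37)⁻¹ = 28 := by
  have h := ZMod.inv_mul_of_unit (4 : ZMod 37) ⟨⟨4, 28, by decide, by decide⟩, rfl⟩
  calc (4 : ZMod 37)⁻¹ = 4⁻¹ * (4 * 28) := by
        rw [show ((4:ZMod 37) * 28) = 1 from by decide, mul_one]
  _ = (4⁻¹ * 4) * 28 := by ring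
  _ = 28 := by rw [h, one_mul]

lemma pd_prod (j : Fin 8) (s : Finset (Fin 8)) :
    pderiv j (∏ i ∈ s, (X i : A37)) =
      if j ∈ s then ∏ i ∈ s.erase j, X i else 0 := by
  induction s using Finset.induction with
  | empty => simp
  | @insert a s ha ih =>
    rw [Finset.prod_insert ha, pderiv_mul, ih]
    by_cases h : j = a
    · subst h
      simp [Finset.erase_insert ha, ha, pderiv_X_self]
    · rw [pderiv_X_of_ne (Ne.symm h)]
      by_cases hs : j ∈ s
      · rw [if_pos hs, if_pos (Finset.mem_insert_of_mem hs), Finset.erase_insert_of_ne (Ne.symm h),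
          Finset.prod_insert (fun hc => ha (Finset.mem_of_mem_erase hc))]
        ring
      · simp [hs, h, Finset.mem_insert]

lemma iden1 : pE8 1 = cE8 1 ^ 2 - 2 * cE8 2 := by
  have h1 : cE8 1 = esymm (Fin 8) (ZMod 37) 1 := rfl
  have h2 : cE8 2 = esymm (Fin 8) (ZMod 37) 2 := rfl
  have hp : pE8 1 = psum (Fin 8) (ZMod 37) 2 := by
    rw [pE8, psum, Finset.powersetCard_one, Finset.sum_map]
    simp
  rw [h1, h2, hp, psum_eq_mul_esymm_sub_sum (Fin 8) (ZMod 37) 2 (by norm_num)]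
  have : (Finset.HasAntidiagonal.antidiagonal 2) = ({(0,2),(1,1),(2,0)} : Finset (ℕ × ℕ)) := by decide
  rw [this]
  rw [show ({(0,2),(1,1),(2,0)} : Finset (ℕ × ℕ)).filter (fun a => a.1 ∈ Set.Ioo 0 2)
    = {(1,1)} by decide]
  simp [psum_one, esymm_one]
  ring

lemma cE8_hom (k : ℕ) : (cE8 k).IsHomogeneous k := by
  apply IsHomogeneous.sum
  intro s hs
  have hc := (Finset.mem_powersetCard.mp hs).2
  have h := IsHomogeneous.prod s (fun i => (X i : A37)) (fun _ => 1)
    (fun i _ => isHomogeneous_X _ i)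
  simpa [hc] using h

lemma pE8_hom (k : ℕ) : (pE8 k).IsHomogeneous (2 * k) := by
  apply IsHomogeneous.sum
  intro s hs
  have hc := (Finset.mem_powersetCard.mp hs).2
  have h := IsHomogeneous.prod s (fun i => (X i : A37) ^ 2) (fun _ => 2)
    (fun i _ => isHomogeneous_X_pow i 2)
  simpa [hc, Finset.sum_const, mul_comm] using h

noncomputable def gg : Fin 8 → A37 :=
  ![pE8 1, pE8 2, pE8 3, pE8 4, pE8 5, pE8 6, pE8 7, cE8 8]
def wt : Fin 8 → ℕ := ![2,4,6,8,10,12,14,8]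

lemma gg_hom (i : Fin 8) : (gg i).IsHomogeneous (wt i) := by
  fin_cases i
  · exact pE8_hom 1
  · exact pE8_hom 2
  · exact pE8_hom 3
  · exact pE8_hom 4
  · exact pE8_hom 5
  · exact pE8_hom 6
  · exact pE8_hom 7
  · exact cE8_hom 8

noncomputable def vmon : Fin 5 → A37 :=
  ![pE8 7, pE8 2 * pE8 5, pE8 3 * pE8 4, pE8 2 ^ 2 * pE8 3, pE8 3 * cE8 8]

noncomputable def Tsub : Submodule (ZMod 37) A37 :=
  Submodule.span (ZMod 37) (Set.range vmon) ⊔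
    (Ideal.span {pE8 1}).restrictScalars (ZMod 37)

lemma p1_mul_mem (r : A37) : pE8 1 * r ∈ Tsub :=
  Submodule.mem_sup_right (Ideal.mem_span_singleton'.mpr ⟨r, mul_comm r _⟩)

lemma vmem (i : Fin 5) : vmon i ∈ Tsub :=
  Submodule.mem_sup_left (Submodule.subset_span ⟨i, rfl⟩)

lemma enum_mem (a b c d e f g h : ℕ)
    (H : 2*a + 4*b + 6*c + 8*d + 10*e + 12*f + 14*g + 8*h = 14) :
    pE8 1 ^ a * pE8 2 ^ b * pE8 3 ^ c * pE8 4 ^ d * pE8 5 ^ e * pE8 6 ^ f *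
      pE8 7 ^ g * cE8 8 ^ h ∈ Tsub := by
  rcases a with _ | a
  case succ =>
    rw [pow_succ']
    rw [show pE8 1 * pE8 1 ^ a * pE8 2 ^ b * pE8 3 ^ c * pE8 4 ^ d * pE8 5 ^ e * pE8 6 ^ f *
      pE8 7 ^ g * cE8 8 ^ h = pE8 1 * (pE8 1 ^ a * pE8 2 ^ b * pE8 3 ^ c * pE8 4 ^ d * pE8 5 ^ e
      * pE8 6 ^ f * pE8 7 ^ g * cE8 8 ^ h) by ring]
    exact p1_mul_mem _
  have key : (b=0∧c=0∧d=0∧e=0∧f=0∧g=1∧h=0) ∨ (b=1∧c=0∧d=0∧e=1∧f=0∧g=0∧h=0) ∨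
      (b=0∧c=1∧d=1∧e=0∧f=0∧g=0∧h=0) ∨ (b=2∧c=1∧d=0∧e=0∧f=0∧g=0∧h=0) ∨
      (b=0∧c=1∧d=0∧e=0∧f=0∧g=0∧h=1) := by
    have hg : g ≤ 1 := by omega
    have hf : f ≤ 1 := by omega
    have he : e ≤ 1 := by omega
    have hd : d ≤ 1 := by omega
    have hh : h ≤ 1 := by omega
    interval_cases g <;> interval_cases f <;> interval_cases e <;> interval_cases d <;>
      interval_cases h <;> omega
  rcases key with ⟨rfl,rfl,rfl,rfl,rfl,rfl,rfl⟩|⟨rfl,rfl,rfl,rfl,rfl,rfl,rfl⟩|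
    ⟨rfl,rfl,rfl,rfl,rfl,rfl,rfl⟩|⟨rfl,rfl,rfl,rfl,rfl,rfl,rfl⟩|⟨rfl,rfl,rfl,rfl,rfl,rfl,rfl⟩ <;>
    simp only [pow_zero, pow_one, one_mul, mul_one]
  · exact vmem 0
  · exact vmem 1
  · exact vmem 2
  · exact vmem 3
  · exact vmem 4

lemma rep_mem (d : A37)
    (hd : d ∈ Algebra.adjoin (ZMod 37)
      {pE8 1, pE8 2, pE8 3, pE8 4, pE8 5, pE8 6, pE8 7, cE8 8})
    (hhom : d.IsHomogeneous 14) : d ∈ Tsub := by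
  have hle : Algebra.adjoin (ZMod 37)
      {pE8 1, pE8 2, pE8 3, pE8 4, pE8 5, pE8 6, pE8 7, cE8 8} ≤ (aeval gg).range := by
    apply Algebra.adjoin_le
    intro x hx
    simp only [Set.mem_insert_iff, Set.mem_singleton_iff] at hx
    rcases hx with rfl|rfl|rfl|rfl|rfl|rfl|rfl|rfl
    · exact ⟨X 0, by show (aeval gg) (X 0) = _; rw [aeval_X]; rfl⟩
    · exact ⟨X 1, by show (aeval gg) (X 1) = _; rw [aeval_X]; rfl⟩
    · exact ⟨X 2, by show (aeval gg) (X 2) = _; rw [aeval_X]; rfl⟩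
    · exact ⟨X 3, by show (aeval gg) (X 3) = _; rw [aeval_X]; rfl⟩
    · exact ⟨X 4, by show (aeval gg) (X 4) = _; rw [aeval_X]; rfl⟩
    · exact ⟨X 5, by show (aeval gg) (X 5) = _; rw [aeval_X]; rfl⟩
    · exact ⟨X 6, by show (aeval gg) (X 6) = _; rw [aeval_X]; rfl⟩
    · exact ⟨X 7, by show (aeval gg) (X 7) = _; rw [aeval_X]; rfl⟩
  obtain ⟨q, hq⟩ := hle hd
  have hterm : ∀ e : Fin 8 →₀ ℕ, (aeval gg) (monomial e (coeff e q)) =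
      C (coeff e q) * ∏ i, gg i ^ e i := by
    intro e
    rw [aeval_monomial, Finsupp.prod_pow]
    rfl
  have hhomt : ∀ e : Fin 8 →₀ ℕ,
      ((aeval gg) (monomial e (coeff e q))).IsHomogeneous (∑ i, wt i * e i) := by
    intro e
    rw [hterm]
    exact (IsHomogeneous.prod Finset.univ _ _ (fun i _ => (gg_hom i).pow (e i))).C_mul _
  have hds : d = ∑ e ∈ q.support, (aeval gg) (monomial e (coeff e q)) := by
    rw [← hq]
    conv_lhs => rw [q.as_sum]
    rw [map_sum]
    rfl
  have hdc : d = ∑ e ∈ q.support with (∑ i, wt i * e i) = 14,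
      (aeval gg) (monomial e (coeff e q)) := by
    have h14 : homogeneousComponent 14 d = d := by
      rw [homogeneousComponent_of_mem (m := 14) (mem_homogeneousSubmodule 14 d |>.mpr hhom),
        if_pos rfl]
    conv_lhs => rw [← h14, hds, map_sum]
    rw [Finset.sum_filter]
    apply Finset.sum_congr rfl
    intro e _
    rw [homogeneousComponent_of_mem (mem_homogeneousSubmodule _ _ |>.mpr (hhomt e))]
    by_cases hE : (∑ i, wt i * e i) = 14
    · rw [if_pos hE.symm, if_pos hE]
    · rw [if_neg (fun hc => hE hc.symm), if_neg hE]
  rw [hdc]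
  apply Submodule.sum_mem
  intro e he
  obtain ⟨_, hE⟩ := Finset.mem_filter.mp he
  rw [hterm, ← MvPolynomial.smul_eq_C_mul]
  apply Tsub.smul_mem
  have hE' : 2*(e 0) + 4*(e 1) + 6*(e 2) + 8*(e 3) + 10*(e 4) + 12*(e 5) + 14*(e 6)
      + 8*(e 7) = 14 := by
    rw [Fin.sum_univ_eight] at hE
    simpa [wt] using hE
  have := enum_mem (e 0) (e 1) (e 2) (e 3) (e 4) (e 5) (e 6) (e 7) hE'
  rw [Fin.prod_univ_eight]
  simpa [gg] using this

lemma extract (P : Fin 8 → ZMod 37) (h1 : eval P (cE8 1) = 0) (h2 : eval P (cE8 2) = 0)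
    (h3 : eval P (pderiv 0 (cE8 1)) = 1) (h4 : eval P (pderiv 0 (cE8 2)) = 0)
    {Y : A37} (hY : cE8 1 * Y ∈ Ideal.span {cE8 1 ^ 2, cE8 2}) : eval P Y = 0 := by
  obtain ⟨u, v, huv⟩ := Ideal.mem_span_pair.mp hY
  rw [pow_two] at huv
  have h := congrArg (fun z : A37 => eval P (pderiv 0 z)) huv
  simp only [map_add, pderiv_mul, eval_add, eval_mul, map_mul] at h
  rw [h1, h2, h3, h4] at h
  simpa using h.symm

def P1 : Fin 8 → ZMod 37 := ![0,1,1,1,1,3,12,18]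

lemma c1P1 : eval P1 (cE8 1) = 0 := by
  rw [cE8, map_sum]; simp only [eval_prod, eval_X]; decide

lemma c2P1 : eval P1 (cE8 2) = 0 := by
  rw [cE8, map_sum]; simp only [eval_prod, eval_X]; decide

lemma c3P1 : eval P1 (cE8 3) = 2 := by
  rw [cE8, map_sum]; simp only [eval_prod, eval_X]; decide

lemma c4P1 : eval P1 (cE8 4) = 10 := by
  rw [cE8, map_sum]; simp only [eval_prod, eval_X]; decide

lemma c5P1 : eval P1 (cE8 5) = 2 := by
  rw [cE8, map_sum]; simp only [eval_prod, eval_X]; decide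

lemma c6P1 : eval P1 (cE8 6) = 12 := by
  rw [cE8, map_sum]; simp only [eval_prod, eval_X]; decide

lemma c7P1 : eval P1 (cE8 7) = 19 := by
  rw [cE8, map_sum]; simp only [eval_prod, eval_X]; decide

lemma c8P1 : eval P1 (cE8 8) = 0 := by
  rw [cE8, map_sum]; simp only [eval_prod, eval_X]; decide

lemma p2P1 : eval P1 (pE8 2) = 20 := by
  rw [pE8, map_sum]; simp only [eval_prod, eval_pow, eval_X]; decide

lemma p3P1 : eval P1 (pE8 3) = 17 := by
  rw [pE8, map_sum]; simp only [eval_prod, eval_pow, eval_X]; decide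

lemma p4P1 : eval P1 (pE8 4) = 18 := by
  rw [pE8, map_sum]; simp only [eval_prod, eval_pow, eval_X]; decide

lemma p5P1 : eval P1 (pE8 5) = 25 := by
  rw [pE8, map_sum]; simp only [eval_prod, eval_pow, eval_X]; decide

lemma h2P1 : eval P1 (hE8 2) = 3 := by
  simp only [hE8, i2E, map_mul, map_add, map_sub, map_neg, map_ofNat, eval_C,
    c2P1, c3P1, c4P1, c5P1, c6P1, c7P1, c8P1]
  decide

lemma h3P1 : eval P1 (hE8 3) = 32 := by
  simp only [hE8, i2E, map_mul, map_add, map_sub, map_neg, map_ofNat, eval_C,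
    c2P1, c3P1, c4P1, c5P1, c6P1, c7P1, c8P1]
  decide

lemma h4P1 : eval P1 (hE8 4) = 1 := by
  simp only [hE8, i2E, map_mul, map_add, map_sub, map_neg, map_ofNat, eval_C,
    c2P1, c3P1, c4P1, c5P1, c6P1, c7P1, c8P1]
  decide

lemma h5P1 : eval P1 (hE8 5) = 26 := by
  simp only [hE8, i2E, map_mul, map_add, map_sub, map_neg, map_ofNat, eval_C,
    c2P1, c3P1, c4P1, c5P1, c6P1, c7P1, c8P1]
  decide

lemma h6P1 : eval P1 (hE8 6) = 14 := by
  simp only [hE8, i2E, map_mul, map_add, map_sub, map_neg, map_ofNat, eval_C,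
    c2P1, c3P1, c4P1, c5P1, c6P1, c7P1, c8P1]
  decide

lemma h7P1 : eval P1 (hE8 7) = 34 := by
  simp only [hE8, i2E, map_mul, map_add, map_sub, map_neg, map_ofNat, eval_C,
    c2P1, c3P1, c4P1, c5P1, c6P1, c7P1, c8P1]
  decide

lemma d1P1 : eval P1 (pderiv 0 (cE8 1)) = 1 := by
  rw [cE8, map_sum]; simp only [pd_prod]
  simp only [map_sum, apply_ite (eval P1), eval_prod, eval_X, map_zero]; decide

lemma d2P1 : eval P1 (pderiv 0 (cE8 2)) = 0 := by
  rw [cE8, map_sum]; simp only [pd_prod]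
  simp only [map_sum, apply_ite (eval P1), eval_prod, eval_X, map_zero]; decide

def P2 : Fin 8 → ZMod 37 := ![0,1,1,1,1,4,10,19]

lemma c1P2 : eval P2 (cE8 1) = 0 := by
  rw [cE8, map_sum]; simp only [eval_prod, eval_X]; decide

lemma c2P2 : eval P2 (cE8 2) = 0 := by
  rw [cE8, map_sum]; simp only [eval_prod, eval_X]; decide

lemma c3P2 : eval P2 (cE8 3) = 3 := by
  rw [cE8, map_sum]; simp only [eval_prod, eval_X]; decide

lemma c4P2 : eval P2 (cE8 4) = 14 := by
  rw [cE8, map_sum]; simp only [eval_prod, eval_X]; decide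

lemma c5P2 : eval P2 (cE8 5) = 8 := by
  rw [cE8, map_sum]; simp only [eval_prod, eval_X]; decide

lemma c6P2 : eval P2 (cE8 6) = 16 := by
  rw [cE8, map_sum]; simp only [eval_prod, eval_X]; decide

lemma c7P2 : eval P2 (cE8 7) = 20 := by
  rw [cE8, map_sum]; simp only [eval_prod, eval_X]; decide

lemma c8P2 : eval P2 (cE8 8) = 0 := by
  rw [cE8, map_sum]; simp only [eval_prod, eval_X]; decide

lemma p2P2 : eval P2 (pE8 2) = 28 := by
  rw [pE8, map_sum]; simp only [eval_prod, eval_pow, eval_X]; decide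

lemma p3P2 : eval P2 (pE8 3) = 14 := by
  rw [pE8, map_sum]; simp only [eval_prod, eval_pow, eval_X]; decide

lemma p4P2 : eval P2 (pE8 4) = 0 := by
  rw [pE8, map_sum]; simp only [eval_prod, eval_pow, eval_X]; decide

lemma p5P2 : eval P2 (pE8 5) = 32 := by
  rw [pE8, map_sum]; simp only [eval_prod, eval_pow, eval_X]; decide

lemma h2P2 : eval P2 (hE8 2) = 23 := by
  simp only [hE8, i2E, map_mul, map_add, map_sub, map_neg, map_ofNat, eval_C,
    c2P2, c3P2, c4P2, c5P2, c6P2, c7P2, c8P2]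
  decide

lemma h3P2 : eval P2 (hE8 3) = 17 := by
  simp only [hE8, i2E, map_mul, map_add, map_sub, map_neg, map_ofNat, eval_C,
    c2P2, c3P2, c4P2, c5P2, c6P2, c7P2, c8P2]
  decide

lemma h4P2 : eval P2 (hE8 4) = 12 := by
  simp only [hE8, i2E, map_mul, map_add, map_sub, map_neg, map_ofNat, eval_C,
    c2P2, c3P2, c4P2, c5P2, c6P2, c7P2, c8P2]
  decide

lemma h5P2 : eval P2 (hE8 5) = 16 := by
  simp only [hE8, i2E, map_mul, map_add, map_sub, map_neg, map_ofNat, eval_C,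
    c2P2, c3P2, c4P2, c5P2, c6P2, c7P2, c8P2]
  decide

lemma h6P2 : eval P2 (hE8 6) = 23 := by
  simp only [hE8, i2E, map_mul, map_add, map_sub, map_neg, map_ofNat, eval_C,
    c2P2, c3P2, c4P2, c5P2, c6P2, c7P2, c8P2]
  decide

lemma h7P2 : eval P2 (hE8 7) = 25 := by
  simp only [hE8, i2E, map_mul, map_add, map_sub, map_neg, map_ofNat, eval_C,
    c2P2, c3P2, c4P2, c5P2, c6P2, c7P2, c8P2]
  decide

lemma d1P2 : eval P2 (pderiv 0 (cE8 1)) = 1 := by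
  rw [cE8, map_sum]; simp only [pd_prod]
  simp only [map_sum, apply_ite (eval P2), eval_prod, eval_X, map_zero]; decide

lemma d2P2 : eval P2 (pderiv 0 (cE8 2)) = 0 := by
  rw [cE8, map_sum]; simp only [pd_prod]
  simp only [map_sum, apply_ite (eval P2), eval_prod, eval_X, map_zero]; decide

def P3 : Fin 8 → ZMod 37 := ![0,1,1,1,1,5,31,34]

lemma c1P3 : eval P3 (cE8 1) = 0 := by
  rw [cE8, map_sum]; simp only [eval_prod, eval_X]; decide

lemma c2P3 : eval P3 (cE8 2) = 0 := by
  rw [cE8, map_sum]; simp only [eval_prod, eval_X]; decide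

lemma c3P3 : eval P3 (cE8 3) = 36 := by
  rw [cE8, map_sum]; simp only [eval_prod, eval_X]; decide

lemma c4P3 : eval P3 (cE8 4) = 35 := by
  rw [cE8, map_sum]; simp only [eval_prod, eval_X]; decide

lemma c5P3 : eval P3 (cE8 5) = 21 := by
  rw [cE8, map_sum]; simp only [eval_prod, eval_X]; decide

lemma c6P3 : eval P3 (cE8 6) = 0 := by
  rw [cE8, map_sum]; simp only [eval_prod, eval_X]; decide

lemma c7P3 : eval P3 (cE8 7) = 16 := by
  rw [cE8, map_sum]; simp only [eval_prod, eval_X]; decide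

lemma c8P3 : eval P3 (cE8 8) = 0 := by
  rw [cE8, map_sum]; simp only [eval_prod, eval_X]; decide

lemma p2P3 : eval P3 (pE8 2) = 33 := by
  rw [pE8, map_sum]; simp only [eval_prod, eval_pow, eval_X]; decide

lemma p3P3 : eval P3 (pE8 3) = 1 := by
  rw [pE8, map_sum]; simp only [eval_prod, eval_pow, eval_X]; decide

lemma p4P3 : eval P3 (pE8 4) = 9 := by
  rw [pE8, map_sum]; simp only [eval_prod, eval_pow, eval_X]; decide

lemma p5P3 : eval P3 (pE8 5) = 2 := by
  rw [pE8, map_sum]; simp only [eval_prod, eval_pow, eval_X]; decide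

lemma h2P3 : eval P3 (hE8 2) = 17 := by
  simp only [hE8, i2E, map_mul, map_add, map_sub, map_neg, map_ofNat, eval_C,
    c2P3, c3P3, c4P3, c5P3, c6P3, c7P3, c8P3]
  decide

lemma h3P3 : eval P3 (hE8 3) = 3 := by
  simp only [hE8, i2E, map_mul, map_add, map_sub, map_neg, map_ofNat, eval_C,
    c2P3, c3P3, c4P3, c5P3, c6P3, c7P3, c8P3]
  decide

lemma h4P3 : eval P3 (hE8 4) = 18 := by
  simp only [hE8, i2E, map_mul, map_add, map_sub, map_neg, map_ofNat, eval_C,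
    c2P3, c3P3, c4P3, c5P3, c6P3, c7P3, c8P3]
  decide

lemma h5P3 : eval P3 (hE8 5) = 21 := by
  simp only [hE8, i2E, map_mul, map_add, map_sub, map_neg, map_ofNat, eval_C,
    c2P3, c3P3, c4P3, c5P3, c6P3, c7P3, c8P3]
  decide

lemma h6P3 : eval P3 (hE8 6) = 26 := by
  simp only [hE8, i2E, map_mul, map_add, map_sub, map_neg, map_ofNat, eval_C,
    c2P3, c3P3, c4P3, c5P3, c6P3, c7P3, c8P3]
  decide

lemma h7P3 : eval P3 (hE8 7) = 0 := by
  simp only [hE8, i2E, map_mul, map_add, map_sub, map_neg, map_ofNat, eval_C,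
    c2P3, c3P3, c4P3, c5P3, c6P3, c7P3, c8P3]
  decide

lemma d1P3 : eval P3 (pderiv 0 (cE8 1)) = 1 := by
  rw [cE8, map_sum]; simp only [pd_prod]
  simp only [map_sum, apply_ite (eval P3), eval_prod, eval_X, map_zero]; decide

lemma d2P3 : eval P3 (pderiv 0 (cE8 2)) = 0 := by
  rw [cE8, map_sum]; simp only [pd_prod]
  simp only [map_sum, apply_ite (eval P3), eval_prod, eval_X, map_zero]; decide

def P4 : Fin 8 → ZMod 37 := ![0,1,1,1,1,8,29,33]

lemma c1P4 : eval P4 (cE8 1) = 0 := by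
  rw [cE8, map_sum]; simp only [eval_prod, eval_X]; decide

lemma c2P4 : eval P4 (cE8 2) = 0 := by
  rw [cE8, map_sum]; simp only [eval_prod, eval_X]; decide

lemma c3P4 : eval P4 (cE8 3) = 17 := by
  rw [cE8, map_sum]; simp only [eval_prod, eval_X]; decide

lemma c4P4 : eval P4 (cE8 4) = 33 := by
  rw [cE8, map_sum]; simp only [eval_prod, eval_X]; decide

lemma c5P4 : eval P4 (cE8 5) = 18 := by
  rw [cE8, map_sum]; simp only [eval_prod, eval_X]; decide

lemma c6P4 : eval P4 (cE8 6) = 35 := by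
  rw [cE8, map_sum]; simp only [eval_prod, eval_X]; decide

lemma c7P4 : eval P4 (cE8 7) = 34 := by
  rw [cE8, map_sum]; simp only [eval_prod, eval_X]; decide

lemma c8P4 : eval P4 (cE8 8) = 0 := by
  rw [cE8, map_sum]; simp only [eval_prod, eval_X]; decide

lemma p2P4 : eval P4 (pE8 2) = 29 := by
  rw [pE8, map_sum]; simp only [eval_prod, eval_pow, eval_X]; decide

lemma p3P4 : eval P4 (pE8 3) = 34 := by
  rw [pE8, map_sum]; simp only [eval_prod, eval_pow, eval_X]; decide

lemma p4P4 : eval P4 (pE8 4) = 33 := by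
  rw [pE8, map_sum]; simp only [eval_prod, eval_pow, eval_X]; decide

lemma p5P4 : eval P4 (pE8 5) = 21 := by
  rw [pE8, map_sum]; simp only [eval_prod, eval_pow, eval_X]; decide

lemma h2P4 : eval P4 (hE8 2) = 7 := by
  simp only [hE8, i2E, map_mul, map_add, map_sub, map_neg, map_ofNat, eval_C,
    c2P4, c3P4, c4P4, c5P4, c6P4, c7P4, c8P4]
  decide

lemma h3P4 : eval P4 (hE8 3) = 29 := by
  simp only [hE8, i2E, map_mul, map_add, map_sub, map_neg, map_ofNat, eval_C,
    c2P4, c3P4, c4P4, c5P4, c6P4, c7P4, c8P4]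
  decide

lemma h4P4 : eval P4 (hE8 4) = 5 := by
  simp only [hE8, i2E, map_mul, map_add, map_sub, map_neg, map_ofNat, eval_C,
    c2P4, c3P4, c4P4, c5P4, c6P4, c7P4, c8P4]
  decide

lemma h5P4 : eval P4 (hE8 5) = 22 := by
  simp only [hE8, i2E, map_mul, map_add, map_sub, map_neg, map_ofNat, eval_C,
    c2P4, c3P4, c4P4, c5P4, c6P4, c7P4, c8P4]
  decide

lemma h6P4 : eval P4 (hE8 6) = 36 := by
  simp only [hE8, i2E, map_mul, map_add, map_sub, map_neg, map_ofNat, eval_C,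
    c2P4, c3P4, c4P4, c5P4, c6P4, c7P4, c8P4]
  decide

lemma h7P4 : eval P4 (hE8 7) = 34 := by
  simp only [hE8, i2E, map_mul, map_add, map_sub, map_neg, map_ofNat, eval_C,
    c2P4, c3P4, c4P4, c5P4, c6P4, c7P4, c8P4]
  decide

lemma d1P4 : eval P4 (pderiv 0 (cE8 1)) = 1 := by
  rw [cE8, map_sum]; simp only [pd_prod]
  simp only [map_sum, apply_ite (eval P4), eval_prod, eval_X, map_zero]; decide

lemma d2P4 : eval P4 (pderiv 0 (cE8 2)) = 0 := by
  rw [cE8, map_sum]; simp only [pd_prod]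
  simp only [map_sum, apply_ite (eval P4), eval_prod, eval_X, map_zero]; decide


theorem stmt14
    (φ : MvPolynomial (Fin 8) (ZMod 37) →ₐ[ZMod 37] MvPolynomial (Fin 8) (ZMod 37))
    (hc1 : φ (cE8 1) = -cE8 1) (hc2 : φ (cE8 2) = cE8 2)
    (hc8 : φ (cE8 8) = cE8 8 - C (4 : ZMod 37)⁻¹ * cE8 1 * cE8 7)
    (hp : ∀ i, 2 ≤ i → i ≤ 7 →
      φ (pE8 i) - (pE8 i + cE8 1 * hE8 i) ∈ Ideal.span {cE8 1 ^ 2})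
    (d : MvPolynomial (Fin 8) (ZMod 37))
    (hd : d ∈ Algebra.adjoin (ZMod 37)
      {pE8 1, pE8 2, pE8 3, pE8 4, pE8 5, pE8 6, pE8 7, cE8 8})
    (hhom : d.IsHomogeneous 14)
    (hfix : φ d - d ∈ Ideal.span {cE8 1 ^ 2, cE8 2}) :
    ∃ a : ZMod 37,
      d - C a * (480 * pE8 7 - pE8 2 ^ 2 * pE8 3 + 40 * pE8 2 * pE8 5 -
        12 * pE8 3 * pE8 4 + 312 * pE8 3 * cE8 8) ∈ Ideal.span {pE8 1} := by
  classical
  obtain ⟨y, hy, z, hz, hyz⟩ := Submodule.mem_sup.mp (by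
    have := rep_mem d hd hhom
    rwa [Tsub] at this)
  obtain ⟨μ, hμ⟩ := (Submodule.mem_span_range_iff_exists_fun (ZMod 37)).mp hy
  obtain ⟨r, hr⟩ := Ideal.mem_span_singleton'.mp ((Submodule.restrictScalars_mem _ _ _).mp hz)
  have vmon0 : vmon 0 = pE8 7 := rfl
  have vmon1 : vmon 1 = pE8 2 * pE8 5 := rfl
  have vmon2 : vmon 2 = pE8 3 * pE8 4 := rfl
  have vmon3 : vmon 3 = pE8 2 ^ 2 * pE8 3 := rfl
  have vmon4 : vmon 4 = pE8 3 * cE8 8 := rfl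
  have hdrep : d = C (μ 0) * pE8 7 + C (μ 1) * (pE8 2 * pE8 5) + C (μ 2) * (pE8 3 * pE8 4) +
      C (μ 3) * (pE8 2 * pE8 2 * pE8 3) + C (μ 4) * (pE8 3 * cE8 8) + pE8 1 * r := by
    rw [← hyz, ← hμ, ← hr, Fin.sum_univ_five, vmon0, vmon1, vmon2, vmon3, vmon4]
    simp only [MvPolynomial.smul_eq_C_mul]
    ring
  have hc1sq : cE8 1 ^ 2 ∈ Ideal.span ({cE8 1 ^ 2, cE8 2} : Set A37) :=
    Ideal.subset_span (by simp)
  have hc2m : cE8 2 ∈ Ideal.span ({cE8 1 ^ 2, cE8 2} : Set A37) :=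
    Ideal.subset_span (by simp)
  have hp1m : pE8 1 ∈ Ideal.span ({cE8 1 ^ 2, cE8 2} : Set A37) := by
    rw [iden1]
    exact sub_mem hc1sq (Ideal.mul_mem_left _ 2 hc2m)
  have hφC : ∀ u : ZMod 37, φ (C u) = C u := fun u => by
    simpa [MvPolynomial.algebraMap_eq] using φ.commutes u
  have hφp1 : φ (pE8 1) = pE8 1 := by
    rw [iden1, map_sub, map_pow, hc1, map_mul, map_ofNat, hc2]
    ring
  have hmul : ∀ a α b β : A37, φ a - a - cE8 1 * α ∈ Ideal.span ({cE8 1 ^ 2, cE8 2} : Set A37) →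
      φ b - b - cE8 1 * β ∈ Ideal.span ({cE8 1 ^ 2, cE8 2} : Set A37) →
      φ (a * b) - a * b - cE8 1 * (α * b + a * β) ∈
        Ideal.span ({cE8 1 ^ 2, cE8 2} : Set A37) := by
    intro a α b β ha hb
    have key : φ (a * b) - a * b - cE8 1 * (α * b + a * β) =
        (φ a - a - cE8 1 * α) * φ b + (a + cE8 1 * α) * (φ b - b - cE8 1 * β) +
          cE8 1 ^ 2 * (α * β) := by rw [map_mul]; ring
    rw [key]
    exact add_mem (add_mem (Ideal.mul_mem_right _ _ ha) (Ideal.mul_mem_left _ _ hb))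
      (Ideal.mul_mem_right _ _ hc1sq)
  have hgp : ∀ i, 2 ≤ i → i ≤ 7 → φ (pE8 i) - pE8 i - cE8 1 * hE8 i ∈
      Ideal.span ({cE8 1 ^ 2, cE8 2} : Set A37) := by
    intro i hi1 hi2
    have h := Ideal.span_mono (show ({cE8 1 ^ 2} : Set A37) ⊆ {cE8 1 ^ 2, cE8 2} by
      intro x hx; simp only [Set.mem_singleton_iff] at hx; simp [hx]) (hp i hi1 hi2)
    rw [show φ (pE8 i) - (pE8 i + cE8 1 * hE8 i) =
      φ (pE8 i) - pE8 i - cE8 1 * hE8 i from by ring] at h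
    exact h
  have hgc8 : φ (cE8 8) - cE8 8 - cE8 1 * (-(C (4 : ZMod 37)⁻¹) * cE8 7) ∈
      Ideal.span ({cE8 1 ^ 2, cE8 2} : Set A37) := by
    have key : φ (cE8 8) - cE8 8 - cE8 1 * (-(C (4 : ZMod 37)⁻¹) * cE8 7) = 0 := by
      rw [hc8]; ring
    rw [key]; exact zero_mem _
  have hCm : ∀ (u : ZMod 37) (m Xm : A37),
      φ m - m - cE8 1 * Xm ∈ Ideal.span ({cE8 1 ^ 2, cE8 2} : Set A37) →
      φ (C u * m) - C u * m - cE8 1 * (C u * Xm) ∈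
        Ideal.span ({cE8 1 ^ 2, cE8 2} : Set A37) := by
    intro u m Xm hm
    have key : φ (C u * m) - C u * m - cE8 1 * (C u * Xm) =
        C u * (φ m - m - cE8 1 * Xm) := by rw [map_mul, hφC]; ring
    rw [key]; exact Ideal.mul_mem_left _ _ hm
  have hgr : φ (pE8 1 * r) - pE8 1 * r - cE8 1 * 0 ∈
      Ideal.span ({cE8 1 ^ 2, cE8 2} : Set A37) := by
    have key : φ (pE8 1 * r) - pE8 1 * r - cE8 1 * 0 = (φ r - r) * pE8 1 := by
      rw [map_mul, hφp1]; ring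
    rw [key]; exact Ideal.mul_mem_left _ _ hp1m
  have hadd : ∀ m Xm m' Xm' : A37,
      φ m - m - cE8 1 * Xm ∈ Ideal.span ({cE8 1 ^ 2, cE8 2} : Set A37) →
      φ m' - m' - cE8 1 * Xm' ∈ Ideal.span ({cE8 1 ^ 2, cE8 2} : Set A37) →
      φ (m + m') - (m + m') - cE8 1 * (Xm + Xm') ∈
        Ideal.span ({cE8 1 ^ 2, cE8 2} : Set A37) := by
    intro m Xm m' Xm' h h'
    have key : φ (m + m') - (m + m') - cE8 1 * (Xm + Xm') =
        (φ m - m - cE8 1 * Xm) + (φ m' - m' - cE8 1 * Xm') := by rw [map_add]; ring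
    rw [key]; exact add_mem h h'
  have hG0 := hCm (μ 0) _ _ (hgp 7 (by norm_num) (by norm_num))
  have hG1 := hCm (μ 1) _ _ (hmul _ _ _ _ (hgp 2 (by norm_num) (by norm_num))
    (hgp 5 (by norm_num) (by norm_num)))
  have hG2 := hCm (μ 2) _ _ (hmul _ _ _ _ (hgp 3 (by norm_num) (by norm_num))
    (hgp 4 (by norm_num) (by norm_num)))
  have hG3 := hCm (μ 3) _ _ (hmul _ _ _ _ (hmul _ _ _ _ (hgp 2 (by norm_num) (by norm_num))
    (hgp 2 (by norm_num) (by norm_num))) (hgp 3 (by norm_num) (by norm_num)))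
  have hG4 := hCm (μ 4) _ _ (hmul _ _ _ _ (hgp 3 (by norm_num) (by norm_num)) hgc8)
  have hGtot := hadd _ _ _ _ (hadd _ _ _ _ (hadd _ _ _ _ (hadd _ _ _ _ (hadd _ _ _ _ hG0 hG1)
    hG2) hG3) hG4) hgr
  rw [← hdrep] at hGtot
  have hkey := sub_mem hfix hGtot
  rw [sub_sub_cancel] at hkey
  have E1 := extract P1 c1P1 c2P1 d1P1 d2P1 hkey
  have E2 := extract P2 c1P2 c2P2 d1P2 d2P2 hkey
  have E3 := extract P3 c1P3 c2P3 d1P3 d2P3 hkey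
  have E4 := extract P4 c1P4 c2P4 d1P4 d2P4 hkey
  simp only [map_add, map_mul, map_neg, eval_C, map_zero, add_zero, i4E,
    h2P1, h3P1, h4P1, h5P1, h6P1, h7P1, p2P1, p3P1, p4P1, p5P1, c7P1, c8P1] at E1
  simp only [map_add, map_mul, map_neg, eval_C, map_zero, add_zero, i4E,
    h2P2, h3P2, h4P2, h5P2, h6P2, h7P2, p2P2, p3P2, p4P2, p5P2, c7P2, c8P2] at E2
  simp only [map_add, map_mul, map_neg, eval_C, map_zero, add_zero, i4E,
    h2P3, h3P3, h4P3, h5P3, h6P3, h7P3, p2P3, p3P3, p4P3, p5P3, c7P3, c8P3] at E3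
  simp only [map_add, map_mul, map_neg, eval_C, map_zero, add_zero, i4E,
    h2P4, h3P4, h4P4, h5P4, h6P4, h7P4, p2P4, p3P4, p4P4, p5P4, c7P4, c8P4] at E4
  have hA : μ 0 = 30 * μ 4 := by
    linear_combination (norm := (ring_nf; reduce_mod_char)) 8*E1 + 24*E2 + 5*E3 + 19*E4
  have hB : μ 1 = 21 * μ 4 := by
    linear_combination (norm := (ring_nf; reduce_mod_char)) 5*E1 + 8*E2 + 21*E3
  have hCq : μ 2 = 27 * μ 4 := by
    linear_combination (norm := (ring_nf; reduce_mod_char)) 2*E1 + 22*E2 + 2*E3 + 21*E4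
  have hD : μ 3 = 30 * μ 4 := by
    linear_combination (norm := (ring_nf; reduce_mod_char)) 15*E1 + 21*E2 + 8*E3 + 12*E4
  refine ⟨7 * μ 4, ?_⟩
  rw [Ideal.mem_span_singleton']
  refine ⟨r, ?_⟩
  have h37A : (37 : A37) = 0 := by
    rw [← map_ofNat (C : ZMod 37 →+* A37) 37, show (37 : ZMod 37) = 0 from by decide, map_zero]
  rw [hdrep, hA, hB, hCq, hD]
  simp only [map_mul, map_ofNat]
  linear_combination (C (μ 4) * ((90 : A37) * pE8 7 + 7*(pE8 2*pE8 5) - 3*(pE8 3*pE8 4)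
    - pE8 2*pE8 2*pE8 3 + 59*(pE8 3*cE8 8))) * h37A
end
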